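/- arXiv:1204.0647 — 8 statements merged into one kernel-verified Lean document; each statement's English description precedes it below -/
import Mathlib

section
/- For any graphs G and H with G having at least one vertex, the chromatic number of the corona product satisfies χ(G⊙H) = max{χ(G), χ(H)+1}. -/
open SimpleGraph

/-- The corona product `G ⊙ H`: one copy of `G` together with one copy of `H`
for each vertex of `G`, where the `i`-th vertex of `G` is joined by an edge to
every vertex of the `i`-th copy of `H`. -/
def corona {α β : Type*} (G : SimpleGraph α) (H : SimpleGraph β) :
    SimpleGraph (α ⊕ α × β) where
  Adj x y :=
    match x, y with
    | Sum.inl u, Sum.inl v => G.Adj u v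
    | Sum.inl u, Sum.inr q => u = q.1
    | Sum.inr p, Sum.inl v => p.1 = v
    | Sum.inr p, Sum.inr q => p.1 = q.1 ∧ H.Adj p.2 q.2
  symm := by
    constructor
    rintro (u | p) (v | q) h
    · exact h.symm
    · exact h.symm
    · exact h.symm
    · exact ⟨h.1.symm, h.2.symm⟩
  loopless := by
    constructor
    rintro (u | p) h
    · exact G.irrefl h
    · exact H.irrefl h.2

section aux

variable {α β : Type*} (G : SimpleGraph α) (H : SimpleGraph β)

/-- `G` embeds into `corona G H` via `Sum.inl`. -/
def coronaEmb : G ↪g corona G H where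
  toFun := Sum.inl
  inj' := fun a b h => by injection h
  map_rel_iff' := Iff.rfl

lemma colorable_corona {m : ℕ} (hG : G.Colorable (m + 1)) (hH : H.Colorable m) :
    (corona G H).Colorable (m + 1) := by
  obtain ⟨cG⟩ := hG
  obtain ⟨cH⟩ := hH
  refine ⟨SimpleGraph.Coloring.mk
    (fun x => match x with
      | Sum.inl v => cG v
      | Sum.inr p => (cG p.1).succAbove (cH p.2)) ?_⟩
  rintro (u | p) (v | q) h
  · exact cG.valid h
  · obtain rfl : u = q.1 := h
    exact fun he => (Fin.succAbove_ne (cG q.1) (cH q.2)) he.symm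
  · obtain rfl : p.1 = v := h
    exact Fin.succAbove_ne (cG p.1) (cH p.2)
  · obtain ⟨h1, h2⟩ := h
    simp only [h1]
    intro he
    exact cH.valid h2 (Fin.succAbove_right_injective he)

lemma colorable_of_corona_left {n : ℕ} (h : (corona G H).Colorable n) :
    G.Colorable n :=
  SimpleGraph.Colorable.of_hom (coronaEmb G H).toHom h

lemma colorable_of_corona_right [Nonempty α] {m : ℕ}
    (h : (corona G H).Colorable (m + 1)) : H.Colorable m := by
  obtain ⟨C⟩ := h
  set v0 : α := Classical.arbitrary α
  have hC : ∀ b : β, C (Sum.inr (v0, b)) ≠ C (Sum.inl v0) := fun b =>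
    C.valid (show (corona G H).Adj (Sum.inr (v0, b)) (Sum.inl v0) from rfl)
  let C' : H.Coloring {x : Fin (m + 1) // ¬ x = C (Sum.inl v0)} :=
    SimpleGraph.Coloring.mk (fun b => ⟨C (Sum.inr (v0, b)), hC b⟩) (by
      intro b b' hbb hf
      exact C.valid (show (corona G H).Adj (Sum.inr (v0, b)) (Sum.inr (v0, b'))
        from ⟨rfl, hbb⟩) (congrArg Subtype.val hf))
  have := C'.colorable
  rwa [Fintype.card_subtype_compl, Fintype.card_subtype_eq, Fintype.card_fin,
    Nat.add_sub_cancel] at this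

end aux

/-- For any graphs `G` and `H` with `G` having at least one vertex,
`χ(G ⊙ H) = max {χ(G), χ(H) + 1}`. -/
theorem stmt_0 {α β : Type*} [Nonempty α] (G : SimpleGraph α) (H : SimpleGraph β) :
    (corona G H).chromaticNumber = max G.chromaticNumber (H.chromaticNumber + 1) := by
  apply le_antisymm
  · rcases eq_or_ne (max G.chromaticNumber (H.chromaticNumber + 1)) ⊤ with htop | htop
    · simp [htop]
    · have hG : G.chromaticNumber ≠ ⊤ := fun h => htop (by simp [h])
      have hH' : H.chromaticNumber ≠ ⊤ := fun h => htop (by simp [h])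
      obtain ⟨g, hg⟩ := SimpleGraph.chromaticNumber_ne_top_iff_exists.mp hG
      obtain ⟨h, hh⟩ := SimpleGraph.chromaticNumber_ne_top_iff_exists.mp hH'
      set g0 := (G.chromaticNumber).toNat with hg0
      set h0 := (H.chromaticNumber).toNat with hh0
      have hGc : G.Colorable g0 := SimpleGraph.colorable_chromaticNumber hg
      have hHc : H.Colorable h0 := SimpleGraph.colorable_chromaticNumber hh
      have hmax : (corona G H).Colorable (max g0 (h0 + 1)) := by
        have h1 : max g0 (h0 + 1) = (max g0 (h0 + 1) - 1) + 1 := by omega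
        rw [h1]
        exact colorable_corona G H
          (by rw [← h1]; exact hGc.mono (le_max_left _ _))
          (hHc.mono (by omega))
      calc (corona G H).chromaticNumber ≤ (max g0 (h0 + 1) : ℕ) :=
            hmax.chromaticNumber_le
        _ = max G.chromaticNumber (H.chromaticNumber + 1) := by
            have hcast : ((g0 ⊔ (h0 + 1) : ℕ) : ℕ∞)
                = (g0 : ℕ∞) ⊔ ((h0 : ℕ∞) + 1) := by
              rcases le_total g0 (h0 + 1) with hle | hle
              · have h2 : (g0 : ℕ∞) ≤ (h0 : ℕ∞) + 1 := by exact_mod_cast hle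
                rw [sup_eq_right.mpr hle, sup_eq_right.mpr h2]; push_cast; ring
              · have h2 : (h0 : ℕ∞) + 1 ≤ (g0 : ℕ∞) := by exact_mod_cast hle
                rw [sup_eq_left.mpr hle, sup_eq_left.mpr h2]
            rw [hcast, hg0, hh0, ENat.coe_toNat hG, ENat.coe_toNat hH']
  · rw [max_le_iff]
    constructor
    · exact SimpleGraph.chromaticNumber_mono_of_hom (coronaEmb G H).toHom
    · rw [SimpleGraph.chromaticNumber]
      refine le_iInf₂ fun n hn => ?_
      match n with
      | 0 =>
        exact absurd ((corona G H).isEmpty_of_colorable_zero hn)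
          (not_isEmpty_of_nonempty _)
      | m + 1 =>
        have := (colorable_of_corona_right G H hn).chromaticNumber_le
        calc H.chromaticNumber + 1 ≤ (m : ℕ∞) + 1 := by
              exact add_le_add_left this 1
          _ = ((m + 1 : ℕ) : ℕ∞) := by push_cast; ring
end

section
/- Let G be a graph of maximum degree Δ₁ and let H be a graph of order n₂. Then χ_{≤3}(G⊙H) ≤ χ_{≤3}(G) + n₂(Δ₁ + 1). -/
open SimpleGraph

/-- `G` admits a coloring with `n` colors in which any two distinct vertices at
distance at most `k` (i.e. joined by a walk of length at most `k`) get
distinct colors. -/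
def DistKColorable {α : Type*} (G : SimpleGraph α) (k n : ℕ) : Prop :=
  ∃ c : α → Fin n, ∀ u v : α, u ≠ v → (∃ w : G.Walk u v, w.length ≤ k) → c u ≠ c v

/-- The distance-`k` chromatic number of `G`. -/
noncomputable def distChromaticNumber {α : Type*} (G : SimpleGraph α) (k : ℕ) : ℕ :=
  sInf {n | DistKColorable G k n}

/-! ### Auxiliary material -/

/-- Greedy coloring of `G` along the order given by `e`. -/
noncomputable def gcol {α : Type*} [Fintype α] (G : SimpleGraph α) [DecidableRel G.Adj]
    (e : α ≃ Fin (Fintype.card α)) (i : ℕ) : Fin (G.maxDegree + 1) :=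
  if hi : i < Fintype.card α then
    let used : Finset (Fin (G.maxDegree + 1)) :=
      (((G.neighborFinset (e.symm ⟨i, hi⟩)).filter fun w => (e w : ℕ) < i).attach).image
        (fun w => gcol G e (e w.1))
    if h : ∃ c, c ∉ used then h.choose else ⟨0, Nat.succ_pos _⟩
  else ⟨0, Nat.succ_pos _⟩
decreasing_by
  · have := w.2
    simp only [Finset.mem_filter] at this
    exact this.2

lemma gcol_used_card {α : Type*} [Fintype α] (G : SimpleGraph α) [DecidableRel G.Adj]
    (e : α ≃ Fin (Fintype.card α)) {i : ℕ} (hi : i < Fintype.card α) :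
    ∃ c, c ∉ ((((G.neighborFinset (e.symm ⟨i, hi⟩)).filter fun w => (e w : ℕ) < i).attach).image
        (fun w => gcol G e (e w.1))) := by
  by_contra h
  push_neg at h
  have huniv : ((((G.neighborFinset (e.symm ⟨i, hi⟩)).filter fun w => (e w : ℕ) < i).attach).image
        (fun w => gcol G e (e w.1))) = Finset.univ := Finset.eq_univ_iff_forall.2 h
  have h1 : (Finset.univ : Finset (Fin (G.maxDegree + 1))).card
      ≤ G.maxDegree := by
    rw [← huniv]
    calc _ ≤ (((G.neighborFinset (e.symm ⟨i, hi⟩)).filter fun w => (e w : ℕ) < i).attach).card :=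
          Finset.card_image_le
    _ = ((G.neighborFinset (e.symm ⟨i, hi⟩)).filter fun w => (e w : ℕ) < i).card :=
          Finset.card_attach
    _ ≤ (G.neighborFinset (e.symm ⟨i, hi⟩)).card := Finset.card_filter_le _ _
    _ = G.degree _ := rfl
    _ ≤ G.maxDegree := G.degree_le_maxDegree _
  simp at h1

lemma gcol_proper {α : Type*} [Fintype α] (G : SimpleGraph α) [DecidableRel G.Adj]
    (e : α ≃ Fin (Fintype.card α)) {u v : α} (huv : G.Adj u v) (hlt : (e u : ℕ) < (e v : ℕ)) :
    gcol G e (e v) ≠ gcol G e (e u) := by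
  have hv : ((e v : ℕ)) < Fintype.card α := (e v).2
  rw [gcol]
  rw [dif_pos hv]
  have hsymm : e.symm ⟨(e v : ℕ), hv⟩ = v := by
    simp [Fin.eta]
  rw [dif_pos (gcol_used_card G e hv)]
  intro hEq
  have hu : u ∈ (G.neighborFinset (e.symm ⟨(e v : ℕ), hv⟩)).filter fun w => (e w : ℕ) < (e v : ℕ) := by
    rw [Finset.mem_filter, SimpleGraph.mem_neighborFinset, hsymm]
    exact ⟨huv.symm, hlt⟩
  have hmem : gcol G e (e u) ∈
      ((((G.neighborFinset (e.symm ⟨(e v : ℕ), hv⟩)).filter fun w => (e w : ℕ) < (e v : ℕ)).attach).image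
        (fun w => gcol G e (e w.1))) :=
    Finset.mem_image.2 ⟨⟨u, hu⟩, Finset.mem_attach _ _, rfl⟩
  exact ((gcol_used_card G e hv).choose_spec) (hEq ▸ hmem)

/-- Projection of a corona vertex to the base graph. -/
def cproj {α β : Type*} : α ⊕ α × β → α := Sum.elim id Prod.fst

/-- Indicator of being in a copy of `H`. -/
def cix {α β : Type*} : α ⊕ α × β → ℕ := Sum.elim (fun _ => 0) (fun _ => 1)

lemma corona_adj_inl' {α β : Type*} (G : SimpleGraph α) (H : SimpleGraph β) {u v : α}
    (h : (corona G H).Adj (Sum.inl u) (Sum.inl v)) :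
    G.Adj (cproj (Sum.inl u : α ⊕ α × β)) (cproj (Sum.inl v : α ⊕ α × β)) := h

lemma cproj_inl_inr {α β : Type*} (G : SimpleGraph α) (H : SimpleGraph β) {u : α} {q : α × β}
    (h : (corona G H).Adj (Sum.inl u) (Sum.inr q)) :
    cproj (Sum.inr q : α ⊕ α × β) = cproj (Sum.inl u : α ⊕ α × β) := h.symm

lemma corona_key {α β : Type*} (G : SimpleGraph α) (H : SimpleGraph β)
    {x y : α ⊕ α × β} (w : (corona G H).Walk x y) :
    ∃ w' : G.Walk (cproj x) (cproj y),
      w'.length + cix x + cix y ≤ max w.length (cix x * (1 + cix y)) := by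
  induction w with
  | @nil z =>
    refine ⟨Walk.nil, ?_⟩
    rcases z with u | p <;> simp [cix]
  | @cons a b c hab t ih =>
    obtain ⟨w₁, hw₁⟩ := ih
    have hc : cix c ≤ 1 := by rcases c with _ | _ <;> simp [cix]
    rcases a with u | p <;> rcases b with v | q
    · refine ⟨Walk.cons (corona_adj_inl' G H hab) w₁, ?_⟩
      simp only [cix, Sum.elim_inl, Walk.length_cons] at hw₁ hc ⊢
      rcases le_max_iff.1 hw₁ with h | h <;>
        exact le_max_iff.2 (Or.inl (by omega))
    · refine ⟨w₁.copy (cproj_inl_inr G H hab) rfl, ?_⟩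
      rw [Walk.length_copy]
      simp only [cix, Sum.elim_inl, Sum.elim_inr, Walk.length_cons] at hw₁ hc ⊢
      rcases le_max_iff.1 hw₁ with h | h <;>
        exact le_max_iff.2 (Or.inl (by omega))
    · refine ⟨w₁.copy (@id (cproj (Sum.inl v : α ⊕ α × β) = cproj (Sum.inr p : α ⊕ α × β)) hab.symm) rfl, ?_⟩
      rw [Walk.length_copy]
      simp only [cix, Sum.elim_inl, Sum.elim_inr, Walk.length_cons] at hw₁ hc ⊢
      rcases le_max_iff.1 hw₁ with h | h <;>
        exact le_max_iff.2 (Or.inl (by omega))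
    · refine ⟨w₁.copy (@id
          (cproj (Sum.inr q : α ⊕ α × β) = cproj (Sum.inr p : α ⊕ α × β))
          (@id (p.1 = q.1 ∧ H.Adj p.2 q.2) hab).1.symm) rfl, ?_⟩
      rw [Walk.length_copy]
      simp only [cix, Sum.elim_inr, Walk.length_cons] at hw₁ hc ⊢
      rcases le_max_iff.1 hw₁ with h | h
      · exact le_max_iff.2 (Or.inl (by omega))
      · exact le_max_iff.2 (Or.inr (by omega))

/-- Let `G` be a graph of maximum degree `Δ₁` and `H` a graph of order `n₂`.
Then `χ_{≤3}(G ⊙ H) ≤ χ_{≤3}(G) + n₂ (Δ₁ + 1)`. -/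
theorem stmt_4 {α β : Type*} [Fintype α] [Fintype β]
    (G : SimpleGraph α) [DecidableRel G.Adj] (H : SimpleGraph β) :
    distChromaticNumber (corona G H) 3
      ≤ distChromaticNumber G 3 + Fintype.card β * (G.maxDegree + 1) := by
  classical
  have hne : {n | DistKColorable G 3 n}.Nonempty := by
    refine ⟨Fintype.card α, Fintype.equivFin α, fun u v huv _ h => ?_⟩
    exact huv ((Fintype.equivFin α).injective h)
  obtain ⟨c, hc⟩ : DistKColorable G 3 (distChromaticNumber G 3) := Nat.sInf_mem hne
  let e := Fintype.equivFin α
  let f : α → Fin (G.maxDegree + 1) := fun v => gcol G e (e v)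
  have hf : ∀ u v, G.Adj u v → f u ≠ f v := by
    intro u v huv
    rcases lt_trichotomy ((e u : ℕ)) ((e v : ℕ)) with h | h | h
    · exact (gcol_proper G e huv h).symm
    · exact absurd (e.injective (Fin.ext h)) huv.ne
    · exact gcol_proper G e huv.symm h
  apply Nat.sInf_le
  have hcard : Fintype.card (Fin (distChromaticNumber G 3) ⊕ Fin (G.maxDegree + 1) × β)
      = distChromaticNumber G 3 + Fintype.card β * (G.maxDegree + 1) := by
    simp [mul_comm]
  let E := Fintype.equivFinOfCardEq hcard
  refine ⟨fun x => E (Sum.map c (fun p : α × β => (f p.1, p.2)) x), ?_⟩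
  rintro (u | p) (v | q) hxy ⟨w, hw⟩ hEq
  · -- inl, inl
    obtain ⟨w', hw'⟩ := corona_key G H w
    simp only [cix, cproj, Sum.elim_inl, id] at hw'
    refine hc u v (fun h => hxy (congrArg Sum.inl h)) ⟨w', ?_⟩ ?_
    · have : max w.length 0 = w.length := by omega
      omega
    · have := E.injective hEq
      simpa using this
  · -- inl, inr : colors in different summands
    have := E.injective hEq
    simp [Sum.map] at this
  · -- inr, inl
    have := E.injective hEq
    simp [Sum.map] at this
  · -- inr, inr
    obtain ⟨w', hw'⟩ := corona_key G H w
    simp only [cix, Sum.elim_inr] at hw'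
    have h3 : max w.length (1 * (1 + 1)) ≤ 3 := max_le hw (by norm_num)
    have h2 : w'.length ≤ 1 := by have := hw'.trans h3; omega
    have hE : (f p.1, p.2) = (f q.1, q.2) := by
      have := E.injective hEq
      simpa [Sum.map] using this
    by_cases hpq : p.1 = q.1
    · refine hxy (congrArg Sum.inr ?_)
      have h2nd : p.2 = q.2 := by injection hE
      exact Prod.ext_iff.2 ⟨hpq, h2nd⟩
    · have hlen : w'.length = 1 := by
        rcases Nat.lt_or_ge w'.length 1 with h | h
        · have h0 : w'.length = 0 := by omega
          exact absurd (Walk.eq_of_length_eq_zero h0) hpq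
        · omega
      exact hf _ _ (Walk.adj_of_length_eq_one hlen) (congrArg Prod.fst hE)
end

section
/- Let G be a triangle-free graph with at least one edge, of minimum degree δ₁ and maximum degree Δ₁, and let H be a graph of order n₂. Then χ_{≤3}(G⊙H) ≥ 2n₂ + Δ₁ + δ₁. -/
open SimpleGraph

/-- Let `G` be a triangle-free graph with at least one edge, of minimum degree
`δ₁` and maximum degree `Δ₁`, and let `H` be a graph of order `n₂`. Then
`χ_{≤3}(G ⊙ H) ≥ 2 n₂ + Δ₁ + δ₁`. -/
theorem stmt_5 {α β : Type*} [Fintype α] [Fintype β]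
    (G : SimpleGraph α) [DecidableRel G.Adj] (H : SimpleGraph β)
    (htf : G.CliqueFree 3) (he : G.edgeSet.Nonempty) :
    2 * Fintype.card β + G.maxDegree + G.minDegree
      ≤ distChromaticNumber (corona G H) 3 := by
  classical
  obtain ⟨u₀, v₀, h₀⟩ : ∃ a b, G.Adj a b := by
    obtain ⟨e, he'⟩ := he
    induction e using Sym2.ind with
    | _ a b => exact ⟨a, b, he'⟩
  haveI : Nonempty α := ⟨u₀⟩
  obtain ⟨u, hu⟩ := G.exists_maximal_degree_vertex
  have hdegpos : 0 < G.degree u := by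
    rw [← hu]
    calc 0 < G.degree u₀ := by
            rw [G.degree_pos_iff_exists_adj]; exact ⟨v₀, h₀⟩
      _ ≤ G.maxDegree := G.degree_le_maxDegree u₀
  obtain ⟨v, huv⟩ : ∃ v, G.Adj u v := (G.degree_pos_iff_exists_adj u).mp hdegpos
  -- the big set of pairwise-close vertices
  set A := G.neighborFinset u with hA
  set B := G.neighborFinset v with hB
  have hABdisj : Disjoint A B := by
    rw [Finset.disjoint_left]
    intro x hxA hxB
    rw [hA, G.mem_neighborFinset] at hxA
    rw [hB, G.mem_neighborFinset] at hxB
    exact htf {u, v, x} (is3Clique_triple_iff.mpr ⟨huv, hxA, hxB⟩)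
  set S : Finset (α ⊕ α × β) :=
    (A ∪ B).image Sum.inl ∪ (({u, v} : Finset α) ×ˢ Finset.univ).image Sum.inr with hS
  have huv_edge : (corona G H).Adj (Sum.inl u) (Sum.inl v) := huv
  -- every vertex of S is within distance 1 of inl u or inl v
  have hnear : ∀ s ∈ S,
      (∃ w : (corona G H).Walk s (Sum.inl u), w.length ≤ 1) ∨
      (∃ w : (corona G H).Walk s (Sum.inl v), w.length ≤ 1) := by
    intro s hs
    rw [hS, Finset.mem_union] at hs
    rcases hs with hs | hs
    · obtain ⟨a, ha, rfl⟩ := Finset.mem_image.mp hs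
      rcases Finset.mem_union.mp ha with ha | ha
      · rw [hA, G.mem_neighborFinset] at ha
        exact Or.inl ⟨Walk.cons (by exact ha.symm) Walk.nil, by exact Nat.le_refl _⟩
      · rw [hB, G.mem_neighborFinset] at ha
        exact Or.inr ⟨Walk.cons (by exact ha.symm) Walk.nil, by exact Nat.le_refl _⟩
    · obtain ⟨p, hp, rfl⟩ := Finset.mem_image.mp hs
      obtain ⟨hp1, -⟩ := Finset.mem_product.mp hp
      rcases Finset.mem_insert.mp hp1 with h1 | h1
      · exact Or.inl ⟨Walk.cons (by exact h1) Walk.nil, by exact Nat.le_refl _⟩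
      · rw [Finset.mem_singleton] at h1
        exact Or.inr ⟨Walk.cons (by exact h1) Walk.nil, by exact Nat.le_refl _⟩
  -- any two vertices of S are at distance at most 3
  have hclose : ∀ s ∈ S, ∀ t ∈ S,
      ∃ w : (corona G H).Walk s t, w.length ≤ 3 := by
    intro s hs t ht
    rcases hnear s hs with ⟨w₁, hw₁⟩ | ⟨w₁, hw₁⟩ <;>
      rcases hnear t ht with ⟨w₂, hw₂⟩ | ⟨w₂, hw₂⟩
    · exact ⟨w₁.append w₂.reverse, by
        rw [Walk.length_append, Walk.length_reverse]; omega⟩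
    · exact ⟨w₁.append (Walk.cons huv_edge w₂.reverse), by
        rw [Walk.length_append, Walk.length_cons, Walk.length_reverse]; omega⟩
    · exact ⟨w₁.append (Walk.cons huv_edge.symm w₂.reverse), by
        rw [Walk.length_append, Walk.length_cons, Walk.length_reverse]; omega⟩
    · exact ⟨w₁.append w₂.reverse, by
        rw [Walk.length_append, Walk.length_reverse]; omega⟩
  -- cardinality of S
  have hScard : S.card = G.degree u + G.degree v + 2 * Fintype.card β := by
    rw [hS, Finset.card_union_of_disjoint (by
      rw [Finset.disjoint_left]
      rintro x hx hy
      obtain ⟨a, -, rfl⟩ := Finset.mem_image.mp hx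
      obtain ⟨p, -, h⟩ := Finset.mem_image.mp hy
      exact absurd h (by simp))]
    rw [Finset.card_image_of_injective _ Sum.inl_injective,
      Finset.card_image_of_injective _ Sum.inr_injective,
      Finset.card_union_of_disjoint hABdisj, Finset.card_product,
      Finset.card_univ, Finset.card_insert_of_notMem (by
        rw [Finset.mem_singleton]; exact huv.ne), Finset.card_singleton]
    rw [hA, hB, G.card_neighborFinset_eq_degree, G.card_neighborFinset_eq_degree]
  have hbound : 2 * Fintype.card β + G.maxDegree + G.minDegree ≤ S.card := by
    rw [hScard, hu]
    have := G.minDegree_le_degree v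
    omega
  -- lower bound each colorable n by S.card
  apply le_csInf
  · refine ⟨Fintype.card (α ⊕ α × β), (Fintype.equivFin (α ⊕ α × β)), ?_⟩
    intro x y hxy _
    exact fun h => hxy ((Fintype.equivFin (α ⊕ α × β)).injective h)
  · rintro n ⟨c, hc⟩
    refine le_trans hbound ?_
    calc S.card ≤ (Finset.univ : Finset (Fin n)).card := by
          apply Finset.card_le_card_of_injOn c (fun a _ => Finset.mem_univ _)
          intro x hx y hy hcxy
          by_contra hne
          exact hc x y hne (hclose x hx y hy) hcxy
      _ = n := by simp
end

section
/- Let H be a graph of order n₂ and let n₁ ≥ 2. Then for every integer k with 2 ≤ k ≤ n₁, χ_{≤k}(P_{n₁}⊙H) = n₂(k−1) + k + 1 if k ≤ n₁ − 1, and χ_{≤k}(P_{n₁}⊙H) = n₂(k−1) + k if k = n₁. -/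
open SimpleGraph

set_option linter.unusedSectionVars false
set_option linter.unusedVariables false
set_option maxHeartbeats 1000000

namespace CoronaAux

/-- Generic lower bound on walk length via a 1-Lipschitz potential. -/
theorem length_ge {α : Type*} {G : SimpleGraph α} (ℓ : α → ℕ)
    (hℓ : ∀ u v, G.Adj u v → ℓ u ≤ ℓ v + 1) {u v : α} (w : G.Walk u v) :
    ℓ u ≤ ℓ v + w.length := by
  induction w with
  | nil => simp
  | cons h p ih =>
    rw [Walk.length_cons]
    have := hℓ _ _ h
    omega

variable {β : Type*} [Fintype β] {H : SimpleGraph β} {n₁ : ℕ}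

local notation "G'" => corona (SimpleGraph.pathGraph n₁) H

/-- potential measuring distance to `inl j`. -/
def levA (n₁ : ℕ) (β : Type*) (j : ℕ) : (Fin n₁ ⊕ Fin n₁ × β) → ℕ
  | Sum.inl u => Nat.dist u.val j
  | Sum.inr p => Nat.dist p.1.val j + 1

theorem levA_lip (j : ℕ) : ∀ u v, (G').Adj u v →
    levA n₁ β j u ≤ levA n₁ β j v + 1 := by
  rintro (a | p) (b | q) h
  · have := pathGraph_adj.mp h
    simp only [levA, Nat.dist]; omega
  · have : a = q.1 := h
    subst this; simp [levA]; omega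
  · have : p.1 = b := h
    subst this; simp [levA, Nat.dist]
  · have : p.1 = q.1 := h.1
    simp only [levA, this]
    omega

theorem path_path_len {i j : Fin n₁} (w : (G').Walk (Sum.inl i) (Sum.inl j)) :
    Nat.dist i.val j.val ≤ w.length := by
  have := length_ge (levA n₁ β j.val) (levA_lip j.val) w
  simpa [levA] using this

theorem reach_copy {j : Fin n₁} {b' : β} :
    ∀ {u v : Fin n₁ ⊕ Fin n₁ × β} (w : (G').Walk u v), v = Sum.inr (j, b') →
      (∀ b : β, u ≠ Sum.inr (j, b)) → Sum.inl j ∈ w.support := by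
  intro u v w
  induction w with
  | nil => intro hv h; subst hv; exact absurd rfl (h b')
  | @cons u x _ hadj w ih =>
    intro hv h
    subst hv
    rw [Walk.support_cons]
    rcases x with a | p
    · by_cases ha : a = j
      · subst ha
        exact List.mem_cons_of_mem _ w.start_mem_support
      · exact List.mem_cons_of_mem _ (ih rfl (fun b hb => by simp at hb))
    · by_cases hp : p.1 = j
      · rcases u with a' | q
        · have : a' = p.1 := hadj
          rw [this, hp]
          exact List.mem_cons_self
        · have hq : q.1 = p.1 := hadj.1
          have : q = (j, q.2) := Prod.ext (by rw [hq, hp]) rfl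
          exact absurd (by rw [this]) (h q.2)
      · refine List.mem_cons_of_mem _ (ih rfl (fun b hb => hp ?_))
        rw [show p = (j, b) from Sum.inr.inj hb]

theorem copy_copy_len {i j : Fin n₁} (hij : i ≠ j) {b b' : β}
    (w : (G').Walk (Sum.inr (i, b)) (Sum.inr (j, b'))) :
    Nat.dist i.val j.val + 2 ≤ w.length := by
  classical
  have hmem : Sum.inl j ∈ w.support := by
    refine reach_copy w rfl (fun c hc => hij ?_)
    have := Sum.inr.inj hc
    exact congrArg Prod.fst this
  have hsplit := w.take_spec hmem
  have hlen : (w.takeUntil _ hmem).length + (w.dropUntil _ hmem).length = w.length := by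
    conv_rhs => rw [← hsplit]
    rw [Walk.length_append]
  have h1 : Nat.dist i.val j.val + 1 ≤ (w.takeUntil _ hmem).length := by
    have := length_ge (levA n₁ β j.val) (levA_lip j.val) (w.takeUntil _ hmem)
    simpa [levA] using this
  have h2 : 1 ≤ (w.dropUntil _ hmem).length := by
    rcases Nat.eq_zero_or_pos (w.dropUntil _ hmem).length with h0 | h
    · exact absurd (Walk.eq_of_length_eq_zero h0) (by simp)
    · exact h
  omega

/-- walk along the path from `inl i` to `inl j` of length `dist i j`. -/
theorem walkP (i j : Fin n₁) :
    ∃ w : (G').Walk (Sum.inl i) (Sum.inl j), w.length = Nat.dist i.val j.val := by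
  have key : ∀ d (i j : Fin n₁), i.val + d = j.val →
      ∃ w : (G').Walk (Sum.inl i) (Sum.inl j), w.length = d := by
    intro d
    induction d with
    | zero =>
      intro i j hij
      have : i = j := Fin.ext (by omega)
      subst this
      exact ⟨Walk.nil, rfl⟩
    | succ d ihd =>
      intro i j hij
      have hi1 : i.val + 1 < n₁ := by have := j.isLt; omega
      set i' : Fin n₁ := ⟨i.val + 1, hi1⟩ with hi'
      have hadj : (G').Adj (Sum.inl i) (Sum.inl i') := by
        show (SimpleGraph.pathGraph n₁).Adj i i'
        rw [pathGraph_adj]; left; rfl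
      obtain ⟨w, hw⟩ := ihd i' j (by simp [hi']; omega)
      exact ⟨Walk.cons hadj w, by simp [hw]⟩
  rcases le_total i.val j.val with h | h
  · obtain ⟨w, hw⟩ := key (j.val - i.val) i j (by omega)
    exact ⟨w, by rw [hw]; simp [Nat.dist]; omega⟩
  · obtain ⟨w, hw⟩ := key (i.val - j.val) j i (by omega)
    exact ⟨w.reverse, by rw [Walk.length_reverse, hw]; simp [Nat.dist]; omega⟩

theorem mod_ne {a b m : ℕ} (hm : 0 < m) (hne : a ≠ b) (hd : Nat.dist a b < m) :
    a % m ≠ b % m := by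
  intro h
  rcases Nat.lt_or_ge a b with hab | hab
  · have : (b - a) % m = 0 := Nat.sub_mod_eq_zero_of_mod_eq h.symm
    rw [Nat.mod_eq_of_lt (by simp [Nat.dist] at hd; omega)] at this
    omega
  · have hba : b < a := by omega
    have : (a - b) % m = 0 := Nat.sub_mod_eq_zero_of_mod_eq h
    rw [Nat.mod_eq_of_lt (by simp [Nat.dist] at hd; omega)] at this
    omega

end CoronaAux

open CoronaAux

section Main
variable {β : Type*} [Fintype β] {H : SimpleGraph β} {n₁ : ℕ}

theorem main_aux (hn : 2 ≤ n₁) (k : ℕ) (hk2 : 2 ≤ k) (m s : ℕ)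
    (hkm : k ≤ m) (hmks : m ≤ k + s) (hs : s ≤ 1) (hmn : m ≤ n₁) (hskn : s + k ≤ n₁ + 1)
    (hcond : ∀ i j : ℕ, i < n₁ → j < n₁ → Nat.dist i j ≤ k → Nat.dist i j < m) :
    distChromaticNumber (corona (SimpleGraph.pathGraph n₁) H) k
      = Fintype.card β * (k - 1) + m := by
  classical
  set n₂ := Fintype.card β with hn₂
  set N := n₂ * (k - 1) + m with hN
  have hm0 : 0 < m := by omega
  have hk10 : 0 < k - 1 := by omega
  -- the coloring
  set e : β → ℕ := fun b => ((Fintype.equivFin β) b).val with he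
  have he_lt : ∀ b, e b < n₂ := fun b => ((Fintype.equivFin β) b).isLt
  have he_inj : Function.Injective e := fun a b h =>
    (Fintype.equivFin β).injective (Fin.ext h)
  set cv : (Fin n₁ ⊕ Fin n₁ × β) → ℕ := fun x =>
    match x with
    | Sum.inl i => i.val % m
    | Sum.inr p => m + (p.1.val % (k - 1)) * n₂ + e p.2 with hcv
  have hcv_lt : ∀ x, cv x < N := by
    rintro (i | ⟨j, b⟩)
    · have := Nat.mod_lt i.val hm0
      simp only [hcv]
      omega
    · have h1 : j.val % (k - 1) ≤ k - 2 := by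
        have := Nat.mod_lt j.val hk10
        omega
      have h2 : (j.val % (k - 1)) * n₂ ≤ (k - 2) * n₂ := Nat.mul_le_mul_right _ h1
      have h3 : e b < n₂ := he_lt b
      have h4 : (k - 2) * n₂ + n₂ = (k - 1) * n₂ := by
        have : k - 1 = (k - 2) + 1 := by omega
        rw [this, add_mul, one_mul]
      have h5 : (k - 1) * n₂ = n₂ * (k - 1) := Nat.mul_comm _ _
      simp only [hcv]
      omega
  -- decoding the copy colors
  have decode : ∀ (q q' r r' : ℕ), r < n₂ → r' < n₂ →
      q * n₂ + r = q' * n₂ + r' → q = q' ∧ r = r' := by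
    intro q q' r r' hr hr' hqr
    have hmod : r = r' := by
      have h1 : (q * n₂ + r) % n₂ = r := by rw [Nat.mul_comm q n₂, Nat.mul_add_mod, Nat.mod_eq_of_lt hr]
      have h2 : (q' * n₂ + r') % n₂ = r' := by rw [Nat.mul_comm q' n₂, Nat.mul_add_mod, Nat.mod_eq_of_lt hr']
      rw [← h1, ← h2, hqr]
    refine ⟨?_, hmod⟩
    have : q * n₂ = q' * n₂ := by omega
    exact Nat.eq_of_mul_eq_mul_right (by omega) this
  have hmemN : N ∈ {n | DistKColorable (corona (SimpleGraph.pathGraph n₁) H) k n} := by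
    refine ⟨fun x => ⟨cv x, hcv_lt x⟩, ?_⟩
    rintro (i | ⟨i, b⟩) (j | ⟨j, b'⟩) hne ⟨w, hw⟩ hceq
    · have hval : cv (Sum.inl i) = cv (Sum.inl j) := congrArg Fin.val hceq
      simp only [hcv] at hval
      have hdist : Nat.dist i.val j.val ≤ k := le_trans (path_path_len w) hw
      have hij : i.val ≠ j.val := fun h => hne (congrArg Sum.inl (Fin.ext h))
      exact mod_ne hm0 hij (hcond _ _ i.isLt j.isLt hdist) hval
    · have hval : cv (Sum.inl i) = cv (Sum.inr (j, b')) := congrArg Fin.val hceq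
      have := Nat.mod_lt i.val hm0
      simp only [hcv] at hval
      omega
    · have hval : cv (Sum.inr (i, b)) = cv (Sum.inl j) := congrArg Fin.val hceq
      have := Nat.mod_lt j.val hm0
      simp only [hcv] at hval
      omega
    · have hval : cv (Sum.inr (i, b)) = cv (Sum.inr (j, b')) := congrArg Fin.val hceq
      simp only [hcv] at hval
      have hval' : (i.val % (k - 1)) * n₂ + e b = (j.val % (k - 1)) * n₂ + e b' := by omega
      obtain ⟨hqq, hrr⟩ := decode _ _ _ _ (he_lt b) (he_lt b') hval'
      have hbb : b = b' := he_inj hrr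
      by_cases hij : i = j
      · exact hne (by rw [hij, hbb])
      · have hdist : Nat.dist i.val j.val + 2 ≤ k := le_trans (copy_copy_len hij w) hw
        have hij' : i.val ≠ j.val := fun h => hij (Fin.ext h)
        exact mod_ne hk10 hij' (by omega) hqq
  -- the clique for the lower bound
  have hlow : ∀ nn ∈ {n | DistKColorable (corona (SimpleGraph.pathGraph n₁) H) k n},
      N ≤ nn := by
    rintro nn ⟨c, hc⟩
    set fP : Fin m → (Fin n₁ ⊕ Fin n₁ × β) :=
      fun t => Sum.inl ⟨t.val, lt_of_lt_of_le t.isLt hmn⟩ with hfP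
    set fC : Fin (k - 1) × β → (Fin n₁ ⊕ Fin n₁ × β) :=
      fun p => Sum.inr (⟨s + p.1.val, by have := p.1.isLt; omega⟩, p.2) with hfC
    have hfP_inj : Function.Injective fP := by
      intro a a' h
      simp only [hfP, Sum.inl.injEq, Fin.mk.injEq] at h
      exact Fin.ext h
    have hfC_inj : Function.Injective fC := by
      intro p p' h
      simp only [hfC, Sum.inr.injEq, Prod.mk.injEq, Fin.mk.injEq] at h
      exact Prod.ext (Fin.ext (by omega)) h.2
    set S : Finset (Fin n₁ ⊕ Fin n₁ × β) :=
      Finset.univ.image fP ∪ Finset.univ.image fC with hS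
    have hcard : S.card = N := by
      rw [hS, Finset.card_union_of_disjoint, Finset.card_image_of_injective _ hfP_inj,
        Finset.card_image_of_injective _ hfC_inj]
      · simp [Fintype.card_prod, hN]
        ring
      · rw [Finset.disjoint_left]
        rintro x hx hy
        obtain ⟨t, _, ht⟩ := Finset.mem_image.mp hx
        obtain ⟨p, _, hp⟩ := Finset.mem_image.mp hy
        rw [← ht] at hp
        simp [hfP, hfC] at hp
    -- walks between distinct clique vertices
    have hwalk : ∀ x ∈ S, ∀ y ∈ S, x ≠ y →
        ∃ w : (corona (SimpleGraph.pathGraph n₁) H).Walk x y, w.length ≤ k := by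
      have hPP : ∀ t t' : Fin m, ∃ w : (corona (SimpleGraph.pathGraph n₁) H).Walk
          (fP t) (fP t'), w.length ≤ k := by
        intro t t'
        obtain ⟨w, hwl⟩ := walkP (n₁ := n₁) (H := H) ⟨t.val, lt_of_lt_of_le t.isLt hmn⟩
          ⟨t'.val, lt_of_lt_of_le t'.isLt hmn⟩
        refine ⟨w, ?_⟩
        rw [hwl]
        have h1 := t.isLt; have h2 := t'.isLt
        simp only [Nat.dist]
        omega
      have hPC : ∀ (t : Fin m) (p : Fin (k - 1) × β),
          ∃ w : (corona (SimpleGraph.pathGraph n₁) H).Walk (fP t) (fC p),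
            w.length ≤ k := by
        intro t p
        obtain ⟨w, hwl⟩ := walkP (n₁ := n₁) (H := H) ⟨t.val, lt_of_lt_of_le t.isLt hmn⟩
          ⟨s + p.1.val, by have := p.1.isLt; omega⟩
        have hadj : (corona (SimpleGraph.pathGraph n₁) H).Adj
            (Sum.inl (⟨s + p.1.val, by have := p.1.isLt; omega⟩ : Fin n₁)) (fC p) := rfl
        refine ⟨w.concat hadj, ?_⟩
        rw [Walk.length_concat, hwl]
        have h1 := t.isLt; have h2 := p.1.isLt
        simp only [Nat.dist]
        omega
      have hCC : ∀ (p p' : Fin (k - 1) × β), p ≠ p' →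
          ∃ w : (corona (SimpleGraph.pathGraph n₁) H).Walk (fC p) (fC p'),
            w.length ≤ k := by
        intro p p' hpp
        obtain ⟨w, hwl⟩ := walkP (n₁ := n₁) (H := H) ⟨s + p.1.val, by have := p.1.isLt; omega⟩
          ⟨s + p'.1.val, by have := p'.1.isLt; omega⟩
        have hadj1 : (corona (SimpleGraph.pathGraph n₁) H).Adj (fC p)
            (Sum.inl (⟨s + p.1.val, by have := p.1.isLt; omega⟩ : Fin n₁)) := rfl
        have hadj2 : (corona (SimpleGraph.pathGraph n₁) H).Adj
            (Sum.inl (⟨s + p'.1.val, by have := p'.1.isLt; omega⟩ : Fin n₁)) (fC p') := rfl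
        refine ⟨Walk.cons hadj1 (w.concat hadj2), ?_⟩
        rw [Walk.length_cons, Walk.length_concat, hwl]
        have h1 := p.1.isLt; have h2 := p'.1.isLt
        simp only [Nat.dist]
        omega
      intro x hx y hy hxy
      rw [hS, Finset.mem_union] at hx hy
      rcases hx with hx | hx <;> rcases hy with hy | hy
      · obtain ⟨t, _, ht⟩ := Finset.mem_image.mp hx
        obtain ⟨t', _, ht'⟩ := Finset.mem_image.mp hy
        subst ht ht'; exact hPP t t'
      · obtain ⟨t, _, ht⟩ := Finset.mem_image.mp hx
        obtain ⟨p, _, hp⟩ := Finset.mem_image.mp hy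
        subst ht hp; exact hPC t p
      · obtain ⟨p, _, hp⟩ := Finset.mem_image.mp hx
        obtain ⟨t, _, ht⟩ := Finset.mem_image.mp hy
        subst ht hp
        obtain ⟨w, hwl⟩ := hPC t p
        exact ⟨w.reverse, by rw [Walk.length_reverse]; exact hwl⟩
      · obtain ⟨p, _, hp⟩ := Finset.mem_image.mp hx
        obtain ⟨p', _, hp'⟩ := Finset.mem_image.mp hy
        subst hp hp'
        exact hCC p p' (fun h => hxy (congrArg fC h))
    have hinj : Set.InjOn c ↑S := by
      intro x hx y hy hxy
      by_contra hne
      exact hc x y hne (hwalk x (by simpa using hx) y (by simpa using hy) hne) hxy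
    have := Finset.card_le_card_of_injOn c (fun a _ => Finset.mem_univ (c a)) hinj
    rw [hcard] at this
    simpa using this
  exact le_antisymm (Nat.sInf_le hmemN) (le_csInf ⟨N, hmemN⟩ hlow)

end Main


/-- Let `H` be a graph of order `n₂` and `n₁ ≥ 2`. Then for every `2 ≤ k ≤ n₁`,
`χ_{≤k}(P_{n₁} ⊙ H) = n₂(k-1) + k + 1` if `k ≤ n₁ - 1`, and
`χ_{≤k}(P_{n₁} ⊙ H) = n₂(k-1) + k` if `k = n₁`. -/
theorem stmt_7 {β : Type*} [Fintype β] (H : SimpleGraph β) (n₁ : ℕ) (hn : 2 ≤ n₁)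
    (k : ℕ) (hk2 : 2 ≤ k) (hkn : k ≤ n₁) :
    (k ≤ n₁ - 1 →
      distChromaticNumber (corona (SimpleGraph.pathGraph n₁) H) k
        = Fintype.card β * (k - 1) + k + 1) ∧
    (k = n₁ →
      distChromaticNumber (corona (SimpleGraph.pathGraph n₁) H) k
        = Fintype.card β * (k - 1) + k) := by
  constructor
  · intro h1
    have := main_aux (H := H) hn k hk2 (k + 1) 1 (by omega) (by omega) (by omega)
      (by omega) (by omega) (fun i j _ _ hd => by omega)
    rw [this]
    omega
  · intro h2
    subst h2
    exact main_aux (H := H) hn k hk2 k 0 le_rfl (by omega) (by omega) le_rfl (by omega)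
      (fun i j hi hj hd => by simp only [Nat.dist] at *; omega)
end

section
/- Let G be a graph of order n₁ ≥ 1 and let H be a graph of order n₂ ≥ 2. Then the Roman domination number of the corona product satisfies γ_R(G⊙H) = 2n₁. -/
open SimpleGraph

/-- A Roman dominating function on `G`: a map `f : V → {0,1,2}` such that every
vertex with value `0` is adjacent to a vertex with value `2`. -/
def IsRomanDominating {α : Type*} (G : SimpleGraph α) (f : α → Fin 3) : Prop :=
  ∀ v : α, f v = 0 → ∃ u : α, G.Adj v u ∧ f u = 2

/-- The Roman domination number of `G`: the minimum weight of a Roman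
dominating function on `G`. -/
noncomputable def romanDominationNumber {α : Type*} [Fintype α] (G : SimpleGraph α) : ℕ :=
  sInf {w | ∃ f : α → Fin 3, IsRomanDominating G f ∧ ∑ v : α, (f v : ℕ) = w}

/-- Let `G` be a graph of order `n₁ ≥ 1` and `H` a graph of order `n₂ ≥ 2`.
Then `γ_R(G ⊙ H) = 2 n₁`. -/
theorem stmt_8 {α β : Type*} [Fintype α] [Fintype β]
    (G : SimpleGraph α) (H : SimpleGraph β)
    (h1 : 1 ≤ Fintype.card α) (h2 : 2 ≤ Fintype.card β) :
    romanDominationNumber (corona G H) = 2 * Fintype.card α := by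
  have hmem : 2 * Fintype.card α ∈
      {w | ∃ f : α ⊕ α × β → Fin 3, IsRomanDominating (corona G H) f ∧
        ∑ v, (f v : ℕ) = w} := by
    refine ⟨Sum.elim (fun _ => 2) (fun _ => 0), ?_, ?_⟩
    · rintro (u | p) h
      · simp at h
      · exact ⟨Sum.inl p.1, rfl, rfl⟩
    · simp [Fintype.sum_sum_type, Finset.sum_const, mul_comm]
  refine le_antisymm (Nat.sInf_le hmem) (le_csInf ⟨_, hmem⟩ ?_)
  rintro w ⟨f, hf, rfl⟩
  have key : ∀ u : α, 2 ≤ (f (Sum.inl u) : ℕ) + ∑ b : β, (f (Sum.inr (u, b)) : ℕ) := by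
    intro u
    by_cases h0 : ∀ b : β, f (Sum.inr (u, b)) ≠ 0
    · have : (Fintype.card β : ℕ) ≤ ∑ b : β, (f (Sum.inr (u, b)) : ℕ) := by
        rw [← Finset.card_univ, Finset.card_eq_sum_ones]
        refine Finset.sum_le_sum fun b _ => ?_
        have := h0 b
        have hv : (f (Sum.inr (u, b)) : ℕ) ≠ 0 := by
          intro h; exact this (Fin.ext h)
        omega
      omega
    · push_neg at h0
      obtain ⟨b, hb⟩ := h0
      obtain ⟨x, hadj, hx⟩ := hf _ hb
      match x with
      | Sum.inl v =>
        have hv : u = v := hadj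
        subst hv
        have : (f (Sum.inl u) : ℕ) = 2 := by rw [hx]; rfl
        omega
      | Sum.inr q =>
        have hq : (u, q.2) = q := Prod.ext hadj.1 rfl
        have hle : (f (Sum.inr (u, q.2)) : ℕ) ≤ ∑ b : β, (f (Sum.inr (u, b)) : ℕ) :=
          Finset.single_le_sum (f := fun b => (f (Sum.inr (u, b)) : ℕ))
            (fun _ _ => Nat.zero_le _) (Finset.mem_univ q.2)
        have : (f (Sum.inr (u, q.2)) : ℕ) = 2 := by rw [hq, hx]; rfl
        omega
  calc 2 * Fintype.card α = ∑ _u : α, 2 := by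
        simp [Finset.sum_const, mul_comm]
    _ ≤ ∑ u : α, ((f (Sum.inl u) : ℕ) + ∑ b : β, (f (Sum.inr (u, b)) : ℕ)) :=
        Finset.sum_le_sum fun u _ => key u
    _ = ∑ v, (f v : ℕ) := by
        rw [Fintype.sum_sum_type, Finset.sum_add_distrib, Fintype.sum_prod_type]
end

section
/- Let G be a graph of order n ≥ 2 that has at least one edge (i.e., G is different from the empty graph on n vertices). Then γ_R(G) + n/2 ≤ γ_R(G⊙K₁) ≤ γ_R(G) + n − 1 (the lower bound meaning 2·γ_R(G⊙K₁) ≥ 2·γ_R(G) + n). -/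
open SimpleGraph

private lemma fin3_iff : ∀ x : Fin 3,
    (x = 0 ↔ (x : ℕ) = 0) ∧ (x = 1 ↔ (x : ℕ) = 1) ∧ (x = 2 ↔ (x : ℕ) = 2) := by decide

private lemma rdn_le {α : Type*} [Fintype α] (G : SimpleGraph α) (f : α → Fin 3)
    (hf : IsRomanDominating G f) : romanDominationNumber G ≤ ∑ v : α, (f v : ℕ) :=
  Nat.sInf_le ⟨f, hf, rfl⟩

private lemma ones_rdf {α : Type*} (G : SimpleGraph α) :
    IsRomanDominating G (fun _ => 1) := by
  intro v h
  exact absurd h one_ne_zero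

private lemma rdn_spec {α : Type*} [Fintype α] (G : SimpleGraph α) :
    ∃ f : α → Fin 3, IsRomanDominating G f ∧ ∑ v : α, (f v : ℕ) = romanDominationNumber G :=
  Nat.sInf_mem (⟨_, fun _ => 1, ones_rdf G, rfl⟩ :
    {w | ∃ f : α → Fin 3, IsRomanDominating G f ∧ ∑ v : α, (f v : ℕ) = w}.Nonempty)

private lemma rdn_le_card {α : Type*} [Fintype α] (G : SimpleGraph α) :
    romanDominationNumber G ≤ Fintype.card α := by
  have := rdn_le G (fun _ => 1) (ones_rdf G)
  simpa using this

private lemma corona_sum {α : Type*} [Fintype α] (g : α ⊕ α × Fin 1 → Fin 3) :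
    ∑ x : α ⊕ α × Fin 1, (g x : ℕ)
      = ∑ v : α, (g (Sum.inl v) : ℕ) + ∑ v : α, (g (Sum.inr (v, 0)) : ℕ) := by
  rw [Fintype.sum_sum_type, Fintype.sum_prod_type]
  simp

private lemma upper_aux {α : Type*} [Fintype α] (G : SimpleGraph α) (f : α → Fin 3)
    (hf : IsRomanDominating G f) :
    romanDominationNumber (corona G (⊥ : SimpleGraph (Fin 1)))
      ≤ ∑ v : α, (f v : ℕ) + ∑ v : α, (if f v = 2 then 0 else 1) := by
  classical
  set g : α ⊕ α × Fin 1 → Fin 3 :=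
    Sum.elim (fun v => f v) (fun p => if f p.1 = 2 then 0 else 1) with hg
  have hrdf : IsRomanDominating (corona G (⊥ : SimpleGraph (Fin 1))) g := by
    rintro (v | p) h
    · have h' : f v = 0 := h
      obtain ⟨u, hu, hu2⟩ := hf v h'
      exact ⟨Sum.inl u, hu, hu2⟩
    · have h' : (if f p.1 = 2 then (0 : Fin 3) else 1) = 0 := h
      have h2 : f p.1 = 2 := by
        by_contra hne
        rw [if_neg hne] at h'
        exact one_ne_zero h'
      exact ⟨Sum.inl p.1, rfl, h2⟩
  have hle := rdn_le (corona G (⊥ : SimpleGraph (Fin 1))) g hrdf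
  rw [corona_sum] at hle
  have e1 : ∑ v : α, (g (Sum.inl v) : ℕ) = ∑ v : α, (f v : ℕ) := rfl
  have e2 : ∑ v : α, (g (Sum.inr (v, 0)) : ℕ) = ∑ v : α, (if f v = 2 then 0 else 1) := by
    refine Finset.sum_congr rfl fun v _ => ?_
    by_cases h : f v = 2 <;> simp [hg, h]
  rw [e1, e2] at hle
  exact hle

private lemma ite_sum_le {α : Type*} [Fintype α] [DecidableEq α] (f : α → Fin 3) (u : α)
    (hu : f u = 2) :
    ∑ v : α, (if f v = 2 then 0 else 1) + 1 ≤ Fintype.card α := by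
  have hpt : ∀ v : α, (if f v = 2 then (0 : ℕ) else 1) + (if v = u then 1 else 0) ≤ 1 := by
    intro v
    by_cases hv : v = u
    · subst hv; simp [hu]
    · simp only [hv, if_false, add_zero]
      split <;> omega
  have hs := Finset.sum_le_sum (fun v (_ : v ∈ Finset.univ) => hpt v)
  rw [Finset.sum_add_distrib] at hs
  simpa [Finset.sum_ite_eq'] using hs

/-- Let `G` be a graph of order `n ≥ 2` with at least one edge. Then
`γ_R(G) + n/2 ≤ γ_R(G ⊙ K₁) ≤ γ_R(G) + n - 1`, the lower bound meaning
`2 γ_R(G ⊙ K₁) ≥ 2 γ_R(G) + n`. -/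
theorem stmt_10 {α : Type*} [Fintype α] (G : SimpleGraph α)
    (hn : 2 ≤ Fintype.card α) (he : G.edgeSet.Nonempty) :
    2 * romanDominationNumber G + Fintype.card α
        ≤ 2 * romanDominationNumber (corona G (⊥ : SimpleGraph (Fin 1))) ∧
      romanDominationNumber (corona G (⊥ : SimpleGraph (Fin 1)))
        ≤ romanDominationNumber G + Fintype.card α - 1 := by
  classical
  constructor
  · -- lower bound : 2γ + n ≤ 2Γ
    obtain ⟨g, hg, hgsum⟩ := rdn_spec (corona G (⊥ : SimpleGraph (Fin 1)))
    set a : α → Fin 3 := fun v => g (Sum.inl v) with ha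
    set b : α → Fin 3 := fun v => g (Sum.inr (v, 0)) with hb
    have hb0 : ∀ v, b v = 0 → a v = 2 := by
      intro v h
      obtain ⟨u, hadj, hu2⟩ := hg _ h
      match u with
      | Sum.inl w =>
          have hw : v = w := hadj
          subst hw
          exact hu2
      | Sum.inr q => exact absurd hadj.2 (fun hfalse => hfalse)
    have hdom : ∀ v, a v = 0 → (∃ u, G.Adj v u ∧ a u = 2) ∨ b v = 2 := by
      intro v h
      obtain ⟨u, hadj, hu2⟩ := hg _ h
      match u with
      | Sum.inl w => exact Or.inl ⟨w, hadj, hu2⟩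
      | Sum.inr q =>
          have hq : v = q.1 := hadj
          have hq' : q = (v, 0) := Prod.ext hq.symm (Subsingleton.elim _ _)
          right
          show g (Sum.inr (v, 0)) = 2
          rw [← hq']
          exact hu2
    set f : α → Fin 3 := fun v =>
      if a v = 2 then 2 else if a v = 1 then 1
      else if ∃ u, G.Adj v u ∧ a u = 2 then 0 else 1 with hfdef
    have hf2 : ∀ v, a v = 2 → f v = 2 := fun v h => by simp [hfdef, h]
    have hfrdf : IsRomanDominating G f := by
      intro v hv
      by_cases h2 : a v = 2
      · rw [hf2 v h2] at hv
        exact absurd hv (by decide)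
      · by_cases h1 : a v = 1
        · have : f v = 1 := by simp [hfdef, h2, h1]
          rw [this] at hv
          exact absurd hv (by decide)
        · by_cases hex : ∃ u, G.Adj v u ∧ a u = 2
          · obtain ⟨u, hu, hu2⟩ := hex
            exact ⟨u, hu, hf2 u hu2⟩
          · have : f v = 1 := by simp [hfdef, h2, h1, hex]
            rw [this] at hv
            exact absurd hv (by decide)
    have hbpos : ∀ v, a v ≠ 2 → 1 ≤ (b v : ℕ) := by
      intro v h
      have hb' : b v ≠ 0 := fun h0 => h (hb0 v h0)
      have : (b v : ℕ) ≠ 0 := fun h0 => hb' ((fin3_iff (b v)).1.mpr h0)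
      omega
    have key : ∀ v, (f v : ℕ) + 2 ≤ 2 * ((a v : ℕ) + (b v : ℕ)) := by
      intro v
      have hflt := (f v).isLt
      by_cases h2 : a v = 2
      · have ha2 : (a v : ℕ) = 2 := ((fin3_iff (a v)).2.2).1 h2
        omega
      · have hb1 := hbpos v h2
        by_cases h1 : a v = 1
        · have ha1 : (a v : ℕ) = 1 := ((fin3_iff (a v)).2.1).1 h1
          omega
        · have ha0' : (a v : ℕ) = 0 := by
            have hlt := (a v).isLt
            have hne2 : (a v : ℕ) ≠ 2 := fun h => h2 (((fin3_iff (a v)).2.2).2 h)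
            have hne1 : (a v : ℕ) ≠ 1 := fun h => h1 (((fin3_iff (a v)).2.1).2 h)
            omega
          have ha0 : a v = 0 := (fin3_iff (a v)).1.2 ha0'
          by_cases hex : ∃ u, G.Adj v u ∧ a u = 2
          · have hf0 : f v = 0 := by simp [hfdef, h2, h1, hex]
            have : (f v : ℕ) = 0 := ((fin3_iff (f v)).1).1 hf0
            omega
          · have hbv2 : b v = 2 := (hdom v ha0).resolve_left hex
            have : (b v : ℕ) = 2 := ((fin3_iff (b v)).2.2).1 hbv2
            omega
    have hW : ∑ v : α, (a v : ℕ) + ∑ v : α, (b v : ℕ)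
        = romanDominationNumber (corona G (⊥ : SimpleGraph (Fin 1))) := by
      rw [← hgsum, corona_sum]
    have hγn := rdn_le_card G
    have hγf := rdn_le G f hfrdf
    have hsum1 : ∑ v : α, ((f v : ℕ) + 2)
        = ∑ v : α, (f v : ℕ) + 2 * Fintype.card α := by
      rw [Finset.sum_add_distrib, Finset.sum_const, Finset.card_univ, smul_eq_mul]
      ring
    have hsum2 : ∑ v : α, (2 * ((a v : ℕ) + (b v : ℕ)))
        = 2 * (∑ v : α, (a v : ℕ) + ∑ v : α, (b v : ℕ)) := by
      rw [← Finset.mul_sum, Finset.sum_add_distrib]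
    have hchain := Finset.sum_le_sum (fun v (_ : v ∈ Finset.univ) => key v)
    rw [hsum1, hsum2, hW] at hchain
    omega
  · -- upper bound : Γ ≤ γ + n - 1
    obtain ⟨f, hf, hsum⟩ := rdn_spec G
    by_cases h2 : ∃ u, f u = 2
    · obtain ⟨u, hu⟩ := h2
      have h1 := upper_aux G f hf
      have hS := ite_sum_le f u hu
      omega
    · have hall : ∀ v, (f v : ℕ) = 1 := by
        intro v
        have hne2 : (f v : ℕ) ≠ 2 := fun h => h2 ⟨v, ((fin3_iff (f v)).2.2).2 h⟩
        have hne0 : (f v : ℕ) ≠ 0 := by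
          intro h
          obtain ⟨w, _, hw⟩ := hf v ((fin3_iff (f v)).1.2 h)
          exact h2 ⟨w, hw⟩
        have := (f v).isLt
        omega
      have hγ : romanDominationNumber G = Fintype.card α := by
        rw [← hsum]
        simp [hall]
      obtain ⟨u, v, huv⟩ : ∃ u v, G.Adj u v := by
        obtain ⟨e, he'⟩ := he
        revert he'
        refine e.ind ?_
        intro u v h
        exact ⟨u, v, h⟩
      have hne : u ≠ v := G.ne_of_adj huv
      set f' : α → Fin 3 := fun w => if w = v then 0 else if w = u then 2 else 1 with hf'def
      have hf'u : f' u = 2 := by simp [hf'def, hne]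
      have hf'rdf : IsRomanDominating G f' := by
        intro w hw
        by_cases hwv : w = v
        · subst hwv
          exact ⟨u, huv.symm, hf'u⟩
        · exfalso
          by_cases hwu : w = u
          · subst hwu
            rw [hf'u] at hw
            exact absurd hw (by decide)
          · have : f' w = 1 := by simp [hf'def, hwv, hwu]
            rw [this] at hw
            exact absurd hw (by decide)
      have hf'sum : ∑ w : α, (f' w : ℕ) ≤ Fintype.card α := by
        have hpt : ∀ w : α, (f' w : ℕ) + (if w = v then 1 else 0)
            ≤ 1 + (if w = u then 1 else 0) := by
          intro w
          by_cases hwv : w = v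
          · subst hwv
            simp [hf'def]
          · by_cases hwu : w = u
            · subst hwu
              simp [hf'def, hne, hwv]
            · simp [hf'def, hwv, hwu]
        have hs := Finset.sum_le_sum (fun w (_ : w ∈ Finset.univ) => hpt w)
        rw [Finset.sum_add_distrib, Finset.sum_add_distrib] at hs
        simp [Finset.sum_ite_eq', Finset.card_univ] at hs
        omega
      have h1 := upper_aux G f' hf'rdf
      have hS := ite_sum_le f' u hf'u
      omega
end

section
/- Let G be a connected graph of order n and let H be a connected graph such that for every locating-dominating set B of minimum cardinality in H there exists a vertex u ∉ B with N(u) ∩ B = B. Then γ_{l-d}(G⊙H) = n·γ_{l-d}(H) + γ(G). -/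
open SimpleGraph

/-- `D` is a dominating set of `G`: every vertex outside `D` has a neighbor in `D`. -/
def IsDominatingSet {α : Type*} (G : SimpleGraph α) (D : Set α) : Prop :=
  ∀ v ∉ D, ∃ u ∈ D, G.Adj v u

/-- The domination number of `G`. -/
noncomputable def dominationNumber {α : Type*} (G : SimpleGraph α) : ℕ :=
  sInf {n | ∃ D : Set α, IsDominatingSet G D ∧ D.ncard = n}

/-- `D` is a locating-dominating set of `G`: it is dominating and distinct
vertices outside `D` have distinct neighborhoods within `D`. -/
def IsLocatingDominating {α : Type*} (G : SimpleGraph α) (D : Set α) : Prop :=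
  IsDominatingSet G D ∧
    ∀ u ∉ D, ∀ v ∉ D, u ≠ v → {x ∈ D | G.Adj u x} ≠ {x ∈ D | G.Adj v x}

/-- The location-domination number of `G`. -/
noncomputable def locatingDominationNumber {α : Type*} (G : SimpleGraph α) : ℕ :=
  sInf {n | ∃ D : Set α, IsLocatingDominating G D ∧ D.ncard = n}
section Helpers
variable {α β : Type*}

lemma corona_adj_inl_inl (G : SimpleGraph α) (H : SimpleGraph β) (u v : α) :
    (corona G H).Adj (Sum.inl u) (Sum.inl v) ↔ G.Adj u v := Iff.rfl
lemma corona_adj_inl_inr (G : SimpleGraph α) (H : SimpleGraph β) (u : α) (q : α × β) :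
    (corona G H).Adj (Sum.inl u) (Sum.inr q) ↔ u = q.1 := Iff.rfl
lemma corona_adj_inr_inl (G : SimpleGraph α) (H : SimpleGraph β) (p : α × β) (v : α) :
    (corona G H).Adj (Sum.inr p) (Sum.inl v) ↔ p.1 = v := Iff.rfl
lemma corona_adj_inr_inr (G : SimpleGraph α) (H : SimpleGraph β) (p q : α × β) :
    (corona G H).Adj (Sum.inr p) (Sum.inr q) ↔ p.1 = q.1 ∧ H.Adj p.2 q.2 := Iff.rfl

lemma isLD_univ (G : SimpleGraph α) : IsLocatingDominating G Set.univ :=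
  ⟨fun v hv => absurd (Set.mem_univ v) hv, fun u hu => absurd (Set.mem_univ u) hu⟩

lemma exists_min_LD [Fintype α] (G : SimpleGraph α) :
    ∃ B : Set α, IsLocatingDominating G B ∧ B.ncard = locatingDominationNumber G :=
  Nat.sInf_mem (⟨Set.univ.ncard, Set.univ, isLD_univ G, rfl⟩ :
    Set.Nonempty {n | ∃ D : Set α, IsLocatingDominating G D ∧ D.ncard = n})

lemma LD_le (G : SimpleGraph α) {D : Set α} (h : IsLocatingDominating G D) :
    locatingDominationNumber G ≤ D.ncard := Nat.sInf_le ⟨D, h, rfl⟩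

lemma exists_min_dom [Fintype α] (G : SimpleGraph α) :
    ∃ D : Set α, IsDominatingSet G D ∧ D.ncard = dominationNumber G :=
  Nat.sInf_mem (⟨Set.univ.ncard, Set.univ, fun v hv => absurd (Set.mem_univ v) hv, rfl⟩ :
    Set.Nonempty {n | ∃ D : Set α, IsDominatingSet G D ∧ D.ncard = n})

lemma dom_le (G : SimpleGraph α) {D : Set α} (h : IsDominatingSet G D) :
    dominationNumber G ≤ D.ncard := Nat.sInf_le ⟨D, h, rfl⟩

lemma LD_nonempty [Nonempty α] (G : SimpleGraph α) {B : Set α}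
    (h : IsLocatingDominating G B) : B.Nonempty := by
  by_contra he
  rw [Set.not_nonempty_iff_eq_empty] at he
  obtain ⟨u, hu, -⟩ := h.1 (Classical.arbitrary α) (by simp [he])
  simp [he] at hu

lemma one_le_ld [Fintype α] [Nonempty α] (G : SimpleGraph α) :
    1 ≤ locatingDominationNumber G := by
  obtain ⟨B, hB, hcard⟩ := exists_min_LD G
  rw [← hcard]
  exact (Set.ncard_pos B.toFinite).mpr (LD_nonempty G hB)

lemma corona_upper [Fintype α] [Fintype β] [Nonempty β]
    (G : SimpleGraph α) (H : SimpleGraph β) :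
    locatingDominationNumber (corona G H)
      ≤ Fintype.card α * locatingDominationNumber H + dominationNumber G := by
  obtain ⟨D, hD, hDcard⟩ := exists_min_dom G
  obtain ⟨B, hBld, hBcard⟩ := exists_min_LD H
  have hBne : B.Nonempty := LD_nonempty H hBld
  obtain ⟨b0, hb0⟩ := hBne
  set S : Set (α ⊕ α × β) := Sum.inl '' D ∪ Sum.inr '' (Set.univ ×ˢ B) with hS
  have meml : ∀ v, Sum.inl v ∈ S ↔ v ∈ D := by intro v; simp [hS]
  have memr : ∀ p : α × β, Sum.inr p ∈ S ↔ p.2 ∈ B := by intro p; simp [hS]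
  have hSld : IsLocatingDominating (corona G H) S := by
    constructor
    · rintro (v | p) hx
      · obtain ⟨u, hu, hadj⟩ := hD v (fun h => hx ((meml v).mpr h))
        exact ⟨Sum.inl u, (meml u).mpr hu, hadj⟩
      · obtain ⟨x, hx', hadj⟩ := hBld.1 p.2 (fun h => hx ((memr p).mpr h))
        exact ⟨Sum.inr (p.1, x), (memr _).mpr hx', rfl, hadj⟩
    · rintro (v | p) hv (w | q) hw hne heq
      · -- inl v vs inl w
        have hvD : v ∉ D := fun h => hv ((meml v).mpr h)
        have hvw : v ≠ w := fun h => hne (by rw [h])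
        have h1 : Sum.inr (v, b0) ∈ {x ∈ S | (corona G H).Adj (Sum.inl v) x} :=
          ⟨(memr _).mpr hb0, rfl⟩
        rw [heq] at h1
        exact hvw h1.2.symm
      · -- inl v vs inr q
        have hvD : v ∉ D := fun h => hv ((meml v).mpr h)
        have hqB : q.2 ∉ B := fun h => hw ((memr q).mpr h)
        obtain ⟨u0, hu0, hadj0⟩ := hD v hvD
        have h1 : Sum.inl u0 ∈ {x ∈ S | (corona G H).Adj (Sum.inl v) x} :=
          ⟨(meml u0).mpr hu0, hadj0⟩
        rw [heq] at h1
        have hq1 : q.1 = u0 := h1.2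
        have h2 : Sum.inr (v, b0) ∈ {x ∈ S | (corona G H).Adj (Sum.inl v) x} :=
          ⟨(memr _).mpr hb0, rfl⟩
        rw [heq] at h2
        have hq2 : q.1 = v := h2.2.1
        rw [← hq2, hq1] at hadj0
        exact G.irrefl hadj0
      · -- inr p vs inl w
        have hwD : w ∉ D := fun h => hw ((meml w).mpr h)
        have hpB : p.2 ∉ B := fun h => hv ((memr p).mpr h)
        obtain ⟨u0, hu0, hadj0⟩ := hD w hwD
        have h1 : Sum.inl u0 ∈ {x ∈ S | (corona G H).Adj (Sum.inl w) x} :=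
          ⟨(meml u0).mpr hu0, hadj0⟩
        rw [← heq] at h1
        have hp1 : p.1 = u0 := h1.2
        have h2 : Sum.inr (w, b0) ∈ {x ∈ S | (corona G H).Adj (Sum.inl w) x} :=
          ⟨(memr _).mpr hb0, rfl⟩
        rw [← heq] at h2
        have hp2 : p.1 = w := h2.2.1
        rw [← hp2, hp1] at hadj0
        exact G.irrefl hadj0
      · -- inr p vs inr q
        have hpB : p.2 ∉ B := fun h => hv ((memr p).mpr h)
        have hqB : q.2 ∉ B := fun h => hw ((memr q).mpr h)
        by_cases h11 : p.1 = q.1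
        · have hne2 : p.2 ≠ q.2 := by
            intro h; exact hne (by rw [Prod.ext h11 h])
          apply hBld.2 p.2 hpB q.2 hqB hne2
          ext x
          constructor
          · rintro ⟨hxB, hadj⟩
            have h1 : Sum.inr (p.1, x) ∈ {y ∈ S | (corona G H).Adj (Sum.inr p) y} :=
              ⟨(memr _).mpr hxB, rfl, hadj⟩
            rw [heq] at h1
            exact ⟨hxB, h1.2.2⟩
          · rintro ⟨hxB, hadj⟩
            have h1 : Sum.inr (q.1, x) ∈ {y ∈ S | (corona G H).Adj (Sum.inr q) y} :=
              ⟨(memr _).mpr hxB, rfl, hadj⟩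
            rw [← heq] at h1
            exact ⟨hxB, h1.2.2⟩
        · obtain ⟨x1, hx1, hadj1⟩ := hBld.1 p.2 hpB
          have h1 : Sum.inr (p.1, x1) ∈ {y ∈ S | (corona G H).Adj (Sum.inr p) y} :=
            ⟨(memr _).mpr hx1, rfl, hadj1⟩
          rw [heq] at h1
          exact h11 (h1.2.1.symm)
  have hcard : S.ncard = Fintype.card α * locatingDominationNumber H + dominationNumber G := by
    have h1 : Disjoint (Sum.inl '' D : Set (α ⊕ α × β)) (Sum.inr '' (Set.univ ×ˢ B)) := by
      rw [Set.disjoint_left]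
      rintro x ⟨v, -, rfl⟩ ⟨p, -, h⟩
      simp at h
    rw [hS, Set.ncard_union_eq h1 (Set.toFinite _) (Set.toFinite _),
      Set.ncard_image_of_injective _ Sum.inl_injective,
      Set.ncard_image_of_injective _ Sum.inr_injective]
    have h2 : (Set.univ ×ˢ B : Set (α × β)).ncard = Fintype.card α * B.ncard := by
      rw [← Nat.card_coe_set_eq, Nat.card_congr (Equiv.Set.prod _ _), Nat.card_prod,
        Nat.card_coe_set_eq, Nat.card_coe_set_eq, Set.ncard_univ,
        Nat.card_eq_fintype_card]
    rw [h2, hBcard, hDcard, Nat.add_comm]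
  calc locatingDominationNumber (corona G H) ≤ S.ncard := LD_le _ hSld
    _ = _ := hcard
end Helpers
lemma corona_lower {α β : Type*} [Fintype α] [Fintype β] [Nonempty β]
    (G : SimpleGraph α) (H : SimpleGraph β)
    (hB : ∀ B : Set β, IsLocatingDominating H B → B.ncard = locatingDominationNumber H →
      ∃ u ∉ B, {x ∈ B | H.Adj u x} = B)
    (S : Set (α ⊕ α × β)) (hS : IsLocatingDominating (corona G H) S) :
    Fintype.card α * locatingDominationNumber H + dominationNumber G ≤ S.ncard := by
  classical
  set γ := locatingDominationNumber H with hγdef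
  set Sv : α → Set β := fun v => {b | Sum.inr (v, b) ∈ S} with hSvdef
  have memSv : ∀ v b, b ∈ Sv v ↔ Sum.inr (v, b) ∈ S := fun v b => Iff.rfl
  -- A1 : each Sv v separates vertices outside it
  have A1 : ∀ v, ∀ b ∉ Sv v, ∀ b' ∉ Sv v, b ≠ b' →
      {x ∈ Sv v | H.Adj b x} ≠ {x ∈ Sv v | H.Adj b' x} := by
    intro v b hb b' hb' hne heq
    apply hS.2 (Sum.inr (v, b)) hb (Sum.inr (v, b')) hb' (by simpa using hne)
    ext y
    rcases y with z | ⟨q1, q2⟩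
    · exact ⟨fun ⟨h1, h2⟩ => ⟨h1, h2⟩, fun ⟨h1, h2⟩ => ⟨h1, h2⟩⟩
    · constructor
      · rintro ⟨hqS, h1, hadj⟩
        have h1' : v = q1 := h1
        subst h1'
        have := (Set.ext_iff.mp heq q2).mp ⟨hqS, hadj⟩
        exact ⟨hqS, rfl, this.2⟩
      · rintro ⟨hqS, h1, hadj⟩
        have h1' : v = q1 := h1
        subst h1'
        have := (Set.ext_iff.mp heq q2).mpr ⟨hqS, hadj⟩
        exact ⟨hqS, rfl, this.2⟩
  -- if the G-vertex of a copy is not in S, that copy's trace set is LD in H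
  have hSvLD : ∀ v, Sum.inl v ∉ S → IsLocatingDominating H (Sv v) := by
    intro v hv
    refine ⟨?_, A1 v⟩
    intro b hb
    obtain ⟨y, hyS, hadj⟩ := hS.1 (Sum.inr (v, b)) hb
    rcases y with z | ⟨q1, q2⟩
    · have h1 : v = z := hadj
      subst h1
      exact absurd hyS hv
    · obtain ⟨h1, hadj2⟩ := hadj
      have h1' : v = q1 := h1
      subst h1'
      exact ⟨q2, hyS, hadj2⟩
  -- A3 : tight copies with G-vertex outside S force domination in G
  have A3 : ∀ v, Sum.inl v ∉ S → (Sv v).ncard = γ → ∃ w, Sum.inl w ∈ S ∧ G.Adj v w := by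
    intro v hv hcard
    by_contra hno
    push_neg at hno
    obtain ⟨u, hu, hutr⟩ := hB (Sv v) (hSvLD v hv) hcard
    have hadj_u : ∀ x ∈ Sv v, H.Adj u x := fun x hx => ((Set.ext_iff.mp hutr x).mpr hx).2
    apply hS.2 (Sum.inl v) hv (Sum.inr (v, u)) hu (by simp)
    ext y
    rcases y with z | ⟨q1, q2⟩
    · constructor
      · rintro ⟨hzS, hadj⟩
        exact absurd hadj (hno z hzS)
      · rintro ⟨hzS, hadj⟩
        have h1 : v = z := hadj
        exact absurd hzS (h1 ▸ hv)
    · constructor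
      · rintro ⟨hqS, hadj⟩
        have h1 : v = q1 := hadj
        subst h1
        exact ⟨hqS, rfl, hadj_u q2 hqS⟩
      · rintro ⟨hqS, h1, hadj⟩
        have h1' : v = q1 := h1
        subst h1'
        exact ⟨hqS, rfl⟩
  -- A2 : every copy contributes at least γ
  have A2 : ∀ v, γ ≤ (Sv v).ncard := by
    intro v
    by_cases hv : Sum.inl v ∈ S
    · -- Sv v separates; analyse domination
      by_cases hdom : IsDominatingSet H (Sv v)
      · exact LD_le H ⟨hdom, A1 v⟩
      · rw [IsDominatingSet] at hdom
        push_neg at hdom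
        obtain ⟨b0, hb0, hb0ne⟩ := hdom
        have huniq : ∀ b ∉ Sv v, b ≠ b0 → ∃ x ∈ Sv v, H.Adj b x := by
          intro b hb hne
          by_contra he
          push_neg at he
          apply A1 v b hb b0 hb0 hne
          ext x
          constructor
          · rintro ⟨hx, hadj⟩
            exact absurd hadj (he x hx)
          · rintro ⟨hx, hadj⟩
            exact absurd hadj (hb0ne x hx)
        have hsep_insert : ∀ c : β, ∀ b ∉ insert c (Sv v), ∀ b' ∉ insert c (Sv v), b ≠ b' →
            {x ∈ insert c (Sv v) | H.Adj b x} ≠ {x ∈ insert c (Sv v) | H.Adj b' x} := by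
          intro c b hb b' hb' hne heq
          apply A1 v b (fun h => hb (Set.mem_insert_of_mem _ h))
            b' (fun h => hb' (Set.mem_insert_of_mem _ h)) hne
          ext x
          constructor
          · rintro ⟨hx, hadj⟩
            have := (Set.ext_iff.mp heq x).mp ⟨Set.mem_insert_of_mem _ hx, hadj⟩
            exact ⟨hx, this.2⟩
          · rintro ⟨hx, hadj⟩
            have := (Set.ext_iff.mp heq x).mpr ⟨Set.mem_insert_of_mem _ hx, hadj⟩
            exact ⟨hx, this.2⟩
        have hB1ld : IsLocatingDominating H (insert b0 (Sv v)) := by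
          refine ⟨?_, hsep_insert b0⟩
          intro b hb
          obtain ⟨x, hx, hadj⟩ := huniq b (fun h => hb (Set.mem_insert_of_mem _ h))
            (fun h => hb (h ▸ Set.mem_insert _ _))
          exact ⟨x, Set.mem_insert_of_mem _ hx, hadj⟩
        have hcard1 : (insert b0 (Sv v)).ncard = (Sv v).ncard + 1 :=
          Set.ncard_insert_of_notMem hb0 (Set.toFinite _)
        have hγ1 : γ ≤ (Sv v).ncard + 1 := hcard1 ▸ LD_le H hB1ld
        by_contra hlt
        push_neg at hlt
        have hcardB1 : (insert b0 (Sv v)).ncard = γ := by omega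
        obtain ⟨u, hu, hutr⟩ := hB _ hB1ld hcardB1
        have huSv : u ∉ Sv v := fun h => hu (Set.mem_insert_of_mem _ h)
        have hadj_u : ∀ x ∈ insert b0 (Sv v), H.Adj u x := fun x hx =>
          ((Set.ext_iff.mp hutr x).mpr hx).2
        have hB2ld : IsLocatingDominating H (insert u (Sv v)) := by
          refine ⟨?_, hsep_insert u⟩
          intro b hb
          have hbSv : b ∉ Sv v := fun h => hb (Set.mem_insert_of_mem _ h)
          by_cases hbb0 : b = b0
          · refine ⟨u, Set.mem_insert _ _, ?_⟩
            subst hbb0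
            exact (hadj_u b (Set.mem_insert _ _)).symm
          · obtain ⟨x, hx, hadj⟩ := huniq b hbSv hbb0
            exact ⟨x, Set.mem_insert_of_mem _ hx, hadj⟩
        have hcardB2 : (insert u (Sv v)).ncard = γ := by
          rw [Set.ncard_insert_of_notMem huSv (Set.toFinite _)]
          omega
        obtain ⟨u', hu', hutr'⟩ := hB _ hB2ld hcardB2
        have hu'Sv : u' ∉ Sv v := fun h => hu' (Set.mem_insert_of_mem _ h)
        have hadj_u' : ∀ x ∈ insert u (Sv v), H.Adj u' x := fun x hx =>
          ((Set.ext_iff.mp hutr' x).mpr hx).2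
        have huu' : u ≠ u' := fun h => hu' (h ▸ Set.mem_insert _ _)
        exfalso
        apply hS.2 (Sum.inr (v, u)) huSv (Sum.inr (v, u')) hu'Sv (by simp [huu'])
        ext y
        rcases y with z | ⟨q1, q2⟩
        · exact ⟨fun ⟨h1, h2⟩ => ⟨h1, h2⟩, fun ⟨h1, h2⟩ => ⟨h1, h2⟩⟩
        · constructor
          · rintro ⟨hqS, h1, hadj⟩
            have h1' : v = q1 := h1
            subst h1'
            exact ⟨hqS, rfl, (hadj_u' q2 (Set.mem_insert_of_mem _ hqS))⟩
          · rintro ⟨hqS, h1, hadj⟩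
            have h1' : v = q1 := h1
            subst h1'
            exact ⟨hqS, rfl, (hadj_u q2 (Set.mem_insert_of_mem _ hqS))⟩
    · exact LD_le H (hSvLD v hv)
  -- counting
  have hsplit : S.ncard = (Sum.inl ⁻¹' S : Set α).ncard + (Sum.inr ⁻¹' S : Set (α × β)).ncard := by
    have hSeq : S = Sum.inl '' (Sum.inl ⁻¹' S) ∪ Sum.inr '' (Sum.inr ⁻¹' S) := by
      ext y
      rcases y with z | q
      · simp
      · simp
    have hd : Disjoint (Sum.inl '' (Sum.inl ⁻¹' S) : Set (α ⊕ α × β))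
        (Sum.inr '' (Sum.inr ⁻¹' S)) := by
      rw [Set.disjoint_left]
      rintro x ⟨w, -, rfl⟩ ⟨p, -, h⟩
      simp at h
    conv_lhs => rw [hSeq]
    rw [Set.ncard_union_eq hd (Set.toFinite _) (Set.toFinite _),
      Set.ncard_image_of_injective _ Sum.inl_injective,
      Set.ncard_image_of_injective _ Sum.inr_injective]
  have hTsum : (Sum.inr ⁻¹' S : Set (α × β)).ncard = ∑ v : α, (Sv v).ncard := by
    rw [Set.ncard_eq_toFinset_card']
    rw [Finset.card_eq_sum_card_fiberwise
      (f := fun p : α × β => p.1) (t := (Finset.univ : Finset α))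
      (fun p _ => Finset.mem_univ _)]
    refine Finset.sum_congr rfl fun v _ => ?_
    rw [Set.ncard_eq_toFinset_card' (Sv v)]
    refine Finset.card_bij (fun p _ => p.2) ?_ ?_ ?_
    · rintro ⟨p1, p2⟩ hp
      simp only [Finset.mem_filter, Set.mem_toFinset, Set.mem_preimage] at hp
      obtain ⟨hp1, hp2⟩ := hp
      exact Set.mem_toFinset.mpr (hp2 ▸ hp1)
    · intro p1 h1 p2 h2 hpe
      simp only [Finset.mem_filter, Set.mem_toFinset] at h1 h2
      exact Prod.ext (h1.2.trans h2.2.symm) hpe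
    · intro b hb
      rw [Set.mem_toFinset] at hb
      refine ⟨(v, b), ?_, rfl⟩
      simp only [Finset.mem_filter, Set.mem_toFinset, Set.mem_preimage]
      exact ⟨hb, trivial⟩
  have hDom : IsDominatingSet G (Sum.inl ⁻¹' S ∪ {v | γ + 1 ≤ (Sv v).ncard}) := by
    intro v hv
    rw [Set.mem_union] at hv
    push_neg at hv
    obtain ⟨hv1, hv2⟩ := hv
    have hv2' : ¬ (γ + 1 ≤ (Sv v).ncard) := hv2
    have hc : (Sv v).ncard = γ := by
      have := A2 v
      omega
    obtain ⟨w, hw, hadj⟩ := A3 v hv1 hc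
    exact ⟨w, Or.inl hw, hadj⟩
  have hgG : dominationNumber G ≤
      (Sum.inl ⁻¹' S : Set α).ncard + {v | γ + 1 ≤ (Sv v).ncard}.ncard :=
    le_trans (dom_le G hDom) (Set.ncard_union_le _ _)
  have hEsum : {v | γ + 1 ≤ (Sv v).ncard}.ncard ≤ ∑ v : α, ((Sv v).ncard - γ) := by
    rw [Set.ncard_eq_toFinset_card']
    calc {v | γ + 1 ≤ (Sv v).ncard}.toFinset.card
        = ∑ _v ∈ {v | γ + 1 ≤ (Sv v).ncard}.toFinset, 1 := by rw [Finset.card_eq_sum_ones]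
      _ ≤ ∑ v ∈ {v | γ + 1 ≤ (Sv v).ncard}.toFinset, ((Sv v).ncard - γ) := by
          refine Finset.sum_le_sum fun i hi => ?_
          rw [Set.mem_toFinset] at hi
          have : γ + 1 ≤ (Sv i).ncard := hi
          omega
      _ ≤ ∑ v : α, ((Sv v).ncard - γ) :=
          Finset.sum_le_sum_of_subset (Finset.subset_univ _)
  have hsum : ∑ v : α, (Sv v).ncard = Fintype.card α * γ + ∑ v : α, ((Sv v).ncard - γ) := by
    have he : ∀ v : α, (Sv v).ncard = γ + ((Sv v).ncard - γ) := fun v => by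
      have := A2 v
      omega
    calc ∑ v : α, (Sv v).ncard = ∑ v : α, (γ + ((Sv v).ncard - γ)) :=
          Finset.sum_congr rfl fun v _ => he v
      _ = ∑ _v : α, γ + ∑ v : α, ((Sv v).ncard - γ) := Finset.sum_add_distrib
      _ = Fintype.card α * γ + ∑ v : α, ((Sv v).ncard - γ) := by
          rw [Finset.sum_const, Finset.card_univ, smul_eq_mul]
  rw [hsplit, hTsum, hsum]
  set K := Fintype.card α * γ
  set a := (Sum.inl ⁻¹' S : Set α).ncard
  set b := ∑ v : α, ((Sv v).ncard - γ)
  set e := {v | γ + 1 ≤ (Sv v).ncard}.ncard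
  omega

/-- Let `G` be a connected graph of order `n` and `H` a connected graph such
that every locating-dominating set `B` of minimum cardinality has a vertex
`u ∉ B` with `N(u) ∩ B = B`. Then `γ_{l-d}(G ⊙ H) = n γ_{l-d}(H) + γ(G)`. -/
theorem stmt_14 {α β : Type*} [Fintype α] [Fintype β]
    (G : SimpleGraph α) (H : SimpleGraph β) (hG : G.Connected) (hH : H.Connected)
    (hB : ∀ B : Set β, IsLocatingDominating H B → B.ncard = locatingDominationNumber H →
      ∃ u ∉ B, {x ∈ B | H.Adj u x} = B) :
    locatingDominationNumber (corona G H)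
      = Fintype.card α * locatingDominationNumber H + dominationNumber G := by
  haveI : Nonempty β := hH.nonempty
  refine le_antisymm (corona_upper G H) ?_
  refine le_csInf ⟨Set.univ.ncard, Set.univ, isLD_univ _, rfl⟩ ?_
  rintro m ⟨S, hSld, rfl⟩
  exact corona_lower G H hB S hSld
end

section
/- Let G be a connected graph of order n and let H be any graph with at least one vertex. Then the independent domination number of the corona product satisfies i(G⊙H) = n·i(H) − β₀(G)·(i(H) − 1), where β₀(G) is the independence number of G. -/
open SimpleGraph

/-- `S` is an independent set of `G`: no two of its vertices are adjacent. -/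
def IsIndependentSet {α : Type*} (G : SimpleGraph α) (S : Set α) : Prop :=
  ∀ u ∈ S, ∀ v ∈ S, ¬ G.Adj u v

/-- The independence number of `G`: the maximum cardinality of an independent set. -/
noncomputable def independenceNumber {α : Type*} (G : SimpleGraph α) : ℕ :=
  sSup {n | ∃ S : Set α, IsIndependentSet G S ∧ S.ncard = n}

/-- The independent domination number of `G`: the minimum cardinality of a set
that is both independent and dominating. -/
noncomputable def independentDominationNumber {α : Type*} (G : SimpleGraph α) : ℕ :=
  sInf {n | ∃ S : Set α, IsIndependentSet G S ∧ IsDominatingSet G S ∧ S.ncard = n}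

lemma indep_bddAbove {V : Type*} [Fintype V] (G : SimpleGraph V) :
    BddAbove {n | ∃ S : Set V, IsIndependentSet G S ∧ S.ncard = n} := by
  refine ⟨Fintype.card V, ?_⟩
  rintro n ⟨S, -, rfl⟩
  have := Set.ncard_le_ncard (Set.subset_univ S) Set.finite_univ
  simpa [Set.ncard_univ] using this

lemma indep_le_beta {V : Type*} [Fintype V] {G : SimpleGraph V} {S : Set V}
    (hS : IsIndependentSet G S) : S.ncard ≤ independenceNumber G :=
  le_csSup (indep_bddAbove G) ⟨S, hS, rfl⟩

lemma exists_indep_max {V : Type*} [Fintype V] (G : SimpleGraph V) :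
    ∃ S : Set V, IsIndependentSet G S ∧ S.ncard = independenceNumber G := by
  have hne : {n | ∃ S : Set V, IsIndependentSet G S ∧ S.ncard = n}.Nonempty :=
    ⟨0, ∅, by intro u hu; simp at hu, by simp⟩
  obtain ⟨S, hS, hc⟩ := Nat.sSup_mem hne (indep_bddAbove G)
  exact ⟨S, hS, hc⟩

lemma max_indep_dominating {V : Type*} [Fintype V] (G : SimpleGraph V) {S : Set V}
    (hS : IsIndependentSet G S) (hc : S.ncard = independenceNumber G) :
    IsDominatingSet G S := by
  intro v hv
  by_contra hno
  push_neg at hno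
  have hT : IsIndependentSet G (insert v S) := by
    rintro u hu w hw hadj
    rcases hu with rfl | hu <;> rcases hw with rfl | hw
    · exact G.irrefl hadj
    · exact hno w hw hadj
    · exact hno u hu hadj.symm
    · exact hS u hu w hw hadj
  have hcard : (insert v S).ncard = S.ncard + 1 :=
    Set.ncard_insert_of_notMem hv (Set.toFinite S)
  have := indep_le_beta hT
  omega

lemma exists_idom {V : Type*} [Fintype V] (G : SimpleGraph V) :
    ∃ S : Set V, IsIndependentSet G S ∧ IsDominatingSet G S ∧
      S.ncard = independentDominationNumber G := by
  have hne : {n | ∃ S : Set V, IsIndependentSet G S ∧ IsDominatingSet G S ∧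
      S.ncard = n}.Nonempty := by
    obtain ⟨S, hS, hc⟩ := exists_indep_max G
    exact ⟨S.ncard, S, hS, max_indep_dominating G hS hc, rfl⟩
  obtain ⟨S, h1, h2, h3⟩ := Nat.sInf_mem hne
  exact ⟨S, h1, h2, h3⟩

lemma idom_le {V : Type*} [Fintype V] {G : SimpleGraph V} {S : Set V}
    (h1 : IsIndependentSet G S) (h2 : IsDominatingSet G S) :
    independentDominationNumber G ≤ S.ncard :=
  Nat.sInf_le ⟨S, h1, h2, rfl⟩

lemma ncard_decomp {α β : Type*} [Fintype α] [Fintype β]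
    (S : Set (α ⊕ α × β)) :
    S.ncard = {v | Sum.inl v ∈ S}.ncard
      + ∑ v : α, ({b | Sum.inr (v, b) ∈ S}).ncard := by
  classical
  have e : S ≃ ({v | Sum.inl v ∈ S} ⊕ (Σ v : α, {b | Sum.inr (v, b) ∈ S})) :=
  { toFun := fun x => match x with
      | ⟨Sum.inl v, h⟩ => Sum.inl ⟨v, h⟩
      | ⟨Sum.inr p, h⟩ => Sum.inr ⟨p.1, ⟨p.2, h⟩⟩
    invFun := fun x => match x with
      | Sum.inl ⟨v, h⟩ => ⟨Sum.inl v, h⟩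
      | Sum.inr ⟨v, b, h⟩ => ⟨Sum.inr (v, b), h⟩
    left_inv := by rintro ⟨(v | ⟨v, b⟩), h⟩ <;> rfl
    right_inv := by rintro (⟨v, h⟩ | ⟨v, b, h⟩) <;> rfl }
  have h := Nat.card_congr e
  simp only [Nat.card_eq_fintype_card, Fintype.card_sum, Fintype.card_sigma] at h
  simpa [Set.ncard_eq_toFinset_card', Set.toFinset_card, Fintype.card_subtype] using h

/-- Let `G` be a connected graph of order `n` and `H` any graph with at least
one vertex. Then `i(G ⊙ H) = n·i(H) - β₀(G)·(i(H) - 1)`. -/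
theorem stmt_17 {α β : Type*} [Fintype α] [Fintype β] [Nonempty β]
    (G : SimpleGraph α) (H : SimpleGraph β) (hG : G.Connected) :
    independentDominationNumber (corona G H)
      = Fintype.card α * independentDominationNumber H
        - independenceNumber G * (independentDominationNumber H - 1) := by
  classical
  obtain ⟨D, hDind, hDdom, hDcard⟩ := exists_idom H
  obtain ⟨A, hAind, hAcard⟩ := exists_indep_max G
  set n := Fintype.card α with hn
  set i := independentDominationNumber H with hidef
  set b := independenceNumber G with hbdef
  have hDne : D.Nonempty := by
    rcases Set.eq_empty_or_nonempty D with h | h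
    · exfalso
      obtain ⟨x⟩ := ‹Nonempty β›
      obtain ⟨u, hu, -⟩ := hDdom x (by simp [h])
      rw [h] at hu
      exact hu
    · exact h
  have hi1 : 1 ≤ i := by
    rw [← hDcard]
    have := (Set.ncard_pos (Set.toFinite D)).mpr hDne
    omega
  have hbn : b ≤ n := by
    rw [← hAcard]
    have := Set.ncard_le_ncard (Set.subset_univ A) Set.finite_univ
    simpa [Set.ncard_univ] using this
  have hkey : b * (i - 1) ≤ n * i := Nat.mul_le_mul hbn (Nat.sub_le _ _)
  -- upper bound
  set S : Set (α ⊕ α × β) :=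
    {x | match x with
      | Sum.inl v => v ∈ A
      | Sum.inr p => p.1 ∉ A ∧ p.2 ∈ D} with hSdef
  have hSind : IsIndependentSet (corona G H) S := by
    rintro (u | p) hu (v | q) hv hadj
    · exact hAind u hu v hv hadj
    · have h1 : u = q.1 := hadj
      have h2 : q.1 ∉ A ∧ q.2 ∈ D := hv
      exact h2.1 (h1 ▸ hu)
    · have h1 : p.1 = v := hadj
      have h2 : p.1 ∉ A ∧ p.2 ∈ D := hu
      exact h2.1 (by rw [h1]; exact hv)
    · have h1 : p.1 = q.1 ∧ H.Adj p.2 q.2 := hadj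
      have h2 : p.1 ∉ A ∧ p.2 ∈ D := hu
      have h3 : q.1 ∉ A ∧ q.2 ∈ D := hv
      exact hDind p.2 h2.2 q.2 h3.2 h1.2
  have hSdom : IsDominatingSet (corona G H) S := by
    rintro (v | p) hx
    · have hvA : v ∉ A := hx
      obtain ⟨c, hc⟩ := hDne
      exact ⟨Sum.inr (v, c), ⟨hvA, hc⟩, rfl⟩
    · by_cases hp : p.1 ∈ A
      · exact ⟨Sum.inl p.1, hp, rfl⟩
      · have hpD : p.2 ∉ D := fun h => hx ⟨hp, h⟩
        obtain ⟨c, hc, hadj⟩ := hDdom p.2 hpD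
        exact ⟨Sum.inr (p.1, c), ⟨hp, hc⟩, rfl, hadj⟩
  have hAfil : (Finset.univ.filter (fun v => v ∈ A)).card = b := by
    rw [← hAcard, ← Nat.card_coe_set_eq, Nat.card_eq_fintype_card,
      Fintype.card_subtype]
  have hAfil' : (Finset.univ.filter (fun v => v ∉ A)).card = n - b := by
    have h := Finset.card_filter_add_card_filter_not
      (s := (Finset.univ : Finset α)) (p := fun v => v ∈ A)
    rw [hAfil, Finset.card_univ] at h
    omega
  have hScard : S.ncard = b + (n - b) * i := by
    rw [ncard_decomp]
    have h1 : {v | Sum.inl v ∈ S} = A := rfl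
    rw [h1, hAcard]
    congr 1
    have h2 : ∀ v : α, {c | Sum.inr (v, c) ∈ S} = if v ∈ A then (∅ : Set β) else D := by
      intro v
      ext c
      show (v ∉ A ∧ c ∈ D) ↔ _
      by_cases hv : v ∈ A <;> simp [hv]
    calc ∑ v : α, {c | Sum.inr (v, c) ∈ S}.ncard
        = ∑ v : α, if v ∈ A then 0 else i := by
          refine Finset.sum_congr rfl fun v _ => ?_
          rw [h2 v]
          split <;> simp [hDcard]
      _ = (n - b) * i := by
          rw [Finset.sum_ite, Finset.sum_const, Finset.sum_const]
          simp [hAfil']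
  have hup : independentDominationNumber (corona G H) ≤ n * i - b * (i - 1) := by
    have h := idom_le hSind hSdom
    rw [hScard] at h
    refine h.trans (le_of_eq ?_)
    zify [hbn, hi1, hkey]
    ring
  -- lower bound
  obtain ⟨T, hTind, hTdom, hTcard⟩ := exists_idom (corona G H)
  set A' := {v | Sum.inl v ∈ T} with hA'def
  have hA'ind : IsIndependentSet G A' := fun u hu v hv hadj => hTind _ hu _ hv hadj
  have hA'b : A'.ncard ≤ b := indep_le_beta hA'ind
  have hA'n : A'.ncard ≤ n := by
    have := Set.ncard_le_ncard (Set.subset_univ A') Set.finite_univ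
    simpa [Set.ncard_univ] using this
  have hfibge : ∀ v : α, v ∉ A' → i ≤ {c | Sum.inr (v, c) ∈ T}.ncard := by
    intro v hv
    refine idom_le ?_ ?_
    · intro c hc d hd hadj
      exact hTind _ hc _ hd ⟨rfl, hadj⟩
    · intro c hc
      obtain ⟨u, hu, hadj⟩ := hTdom (Sum.inr (v, c)) hc
      cases u with
      | inl w =>
        have h1 : v = w := hadj
        subst h1
        exact absurd hu hv
      | inr q =>
        have h1 : v = q.1 ∧ H.Adj c q.2 := hadj
        refine ⟨q.2, ?_, h1.2⟩
        show Sum.inr (v, q.2) ∈ T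
        rw [h1.1, Prod.mk.eta]
        exact hu
  have hA'fil : (Finset.univ.filter (fun v => v ∈ A')).card = A'.ncard := by
    rw [← Nat.card_coe_set_eq, Nat.card_eq_fintype_card, Fintype.card_subtype]
  have hA'fil' : (Finset.univ.filter (fun v => v ∉ A')).card = n - A'.ncard := by
    have h := Finset.card_filter_add_card_filter_not
      (s := (Finset.univ : Finset α)) (p := fun v => v ∈ A')
    rw [hA'fil, Finset.card_univ] at h
    omega
  have hsum : (n - A'.ncard) * i ≤ ∑ v : α, {c | Sum.inr (v, c) ∈ T}.ncard := by
    calc (n - A'.ncard) * i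
        = ∑ _v ∈ Finset.univ.filter (fun v => v ∉ A'), i := by
          rw [Finset.sum_const, hA'fil', smul_eq_mul]
      _ ≤ ∑ v ∈ Finset.univ.filter (fun v => v ∉ A'), {c | Sum.inr (v, c) ∈ T}.ncard := by
          refine Finset.sum_le_sum fun v hv => ?_
          exact hfibge v (Finset.mem_filter.mp hv).2
      _ ≤ ∑ v : α, {c | Sum.inr (v, c) ∈ T}.ncard :=
          Finset.sum_le_sum_of_subset (Finset.filter_subset _ _)
  have hlow : n * i - b * (i - 1) ≤ independentDominationNumber (corona G H) := by
    rw [← hTcard, ncard_decomp]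
    have h1 : A'.ncard + (n - A'.ncard) * i
        ≤ {v | Sum.inl v ∈ T}.ncard + ∑ v : α, {c | Sum.inr (v, c) ∈ T}.ncard :=
      Nat.add_le_add_left hsum _
    refine le_trans ?_ h1
    have hab : (A'.ncard : ℤ) ≤ b := by exact_mod_cast hA'b
    have hi1' : (1 : ℤ) ≤ i := by exact_mod_cast hi1
    zify [hi1, hA'n, hkey]
    nlinarith [mul_nonneg (sub_nonneg.mpr hab) (sub_nonneg.mpr hi1')]
  exact le_antisymm hup hlow
end
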